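/- arXiv:1803.00239 — 3 statements merged into one kernel-verified Lean document; each statement's English description precedes it below -/
import Mathlib

section
/- Let L be a field with automorphism σ of finite order n, K = L^σ, and let {α, σ(α), …, σ^{n−1}(α)} be a normal basis of L/K. Setting β = σ(α)α^{-1}, suppose γ ∈ L satisfies (x−γ)·lclm(x−σ(β),…,x−σ^{n−1}(β)) = x^n − 1 in L[x;σ]. Then for all 0 ≤ k ≤ n−1, lcrm(x−γ, x−σ(γ), …, x−σ^k(γ)) · lclm(x−σ^{k+1}(β), …, x−σ^{n−1}(β)) = x^n − 1. -/
/-- `f` is monic in the (abstractly presented) skew polynomial ring, in terms of the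
coordinate map `repinv` sending a skew polynomial to its coefficient family. -/
def SkewMonic {L S : Type*} [Field L] [Ring S] (repinv : S → (ℕ →₀ L)) (f : S) : Prop :=
  ∃ d : ℕ, repinv f d = 1 ∧ ∀ k, d < k → repinv f k = 0

/-- `g` is the least common left multiple of the family `F`: `g` is monic and the set of
left multiples of `g` is exactly the set of common left multiples of `F`. -/
def IsLCLM {L S : Type*} [Field L] [Ring S] (repinv : S → (ℕ →₀ L))
    (F : Set S) (g : S) : Prop :=
  SkewMonic repinv g ∧ ∀ s : S, (∃ q, s = q * g) ↔ ∀ f ∈ F, ∃ q, s = q * f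

/-- `g` is the least common right multiple of the family `F`. -/
def IsLCRM {L S : Type*} [Field L] [Ring S] (repinv : S → (ℕ →₀ L))
    (F : Set S) (g : S) : Prop :=
  SkewMonic repinv g ∧ ∀ s : S, (∃ q, s = g * q) ↔ ∀ f ∈ F, ∃ q, s = f * q

section Skew

variable {L S : Type*} [Field L] [Ring S]

/-- twisted convolution of coefficient families -/
noncomputable def mulF (σ : L ≃+* L) (p q : ℕ →₀ L) : ℕ →₀ L :=
  p.sum fun j a => q.sum fun k b => Finsupp.single (j + k) (a * (⇑σ)^[j] b)

variable (σ : L ≃+* L) (ι : L →+* S) (x : S) (rep : (ℕ →₀ L) ≃+ S)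

lemma iter_map_mul (j : ℕ) (a b : L) : (⇑σ)^[j] (a * b) = (⇑σ)^[j] a * (⇑σ)^[j] b := by
  induction j generalizing a b with
  | zero => simp
  | succ j ih => simp [Function.iterate_succ_apply, ih, map_mul]

lemma iter_map_one (j : ℕ) : (⇑σ)^[j] (1 : L) = 1 := by
  induction j with
  | zero => rfl
  | succ j ih => simp [Function.iterate_succ_apply, map_one, ih]

lemma iter_inj (j : ℕ) {a b : L} (h : (⇑σ)^[j] a = (⇑σ)^[j] b) : a = b :=
  (Function.Injective.iterate σ.injective j) h

lemma iter_map_zero (j : ℕ) : (⇑σ)^[j] (0 : L) = 0 := by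
  induction j with
  | zero => rfl
  | succ j ih => simp [Function.iterate_succ_apply, map_zero, ih]

lemma iter_ne_zero (j : ℕ) {a : L} (ha : a ≠ 0) : (⇑σ)^[j] a ≠ 0 := by
  intro h
  exact ha (iter_inj σ j (h.trans (iter_map_zero σ j).symm))

variable (hx : ∀ a : L, x * ι a = ι (σ a) * x)
variable (hrep : ∀ p : ℕ →₀ L, rep p = ∑ k ∈ p.support, ι (p k) * x ^ k)

include hx in

lemma xpow_mul_ι (j : ℕ) (a : L) : x ^ j * ι a = ι ((⇑σ)^[j] a) * x ^ j := by
  induction j generalizing a with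
  | zero => simp
  | succ j ih =>
    rw [pow_succ', mul_assoc, ih a, ← mul_assoc, hx, mul_assoc, ← pow_succ',
      Function.iterate_succ_apply']

include hx in
lemma mono_mul (j k : ℕ) (a b : L) :
    (ι a * x ^ j) * (ι b * x ^ k) = ι (a * (⇑σ)^[j] b) * x ^ (j + k) := by
  rw [mul_assoc, ← mul_assoc (x ^ j), xpow_mul_ι σ ι x hx, mul_assoc, ← pow_add,
    ← mul_assoc, ← map_mul]

include hrep in
lemma rep_single (k : ℕ) (a : L) : rep (Finsupp.single k a) = ι a * x ^ k := by
  rcases eq_or_ne a 0 with rfl | ha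
  · simp [hrep]
  · rw [hrep, Finsupp.support_single_ne_zero _ ha]
    simp

include hrep in
lemma s_induction (P : S → Prop) (h0 : P 0) (hm : ∀ a j, P (ι a * x ^ j))
    (hadd : ∀ s t, P s → P t → P (s + t)) : ∀ s, P s := by
  intro s
  have : ∀ p : ℕ →₀ L, P (rep p) := by
    intro p
    induction p using Finsupp.induction with
    | zero => simpa using h0
    | single_add a b f _ _ ih =>
      rw [map_add, rep_single ι x rep hrep]
      exact hadd _ _ (hm _ _) ih
  simpa using this (rep.symm s)

include hx hrep in
lemma rep_mul (p q : ℕ →₀ L) : rep p * rep q = rep (mulF σ p q) := by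
  rw [hrep p, hrep q, mulF, Finsupp.sum, map_sum, Finset.sum_mul_sum]
  refine Finset.sum_congr rfl fun j hj => ?_
  rw [Finsupp.sum, map_sum]
  refine Finset.sum_congr rfl fun k hk => ?_
  rw [rep_single ι x rep hrep, mono_mul σ ι x hx]

include hx hrep in
lemma symm_mul (f g : S) : rep.symm (f * g) = mulF σ (rep.symm f) (rep.symm g) := by
  have := rep_mul σ ι x rep hx hrep (rep.symm f) (rep.symm g)
  simp at this
  rw [this]
  simp

noncomputable def Degp (p : ℕ →₀ L) : ℕ := p.support.sup id

lemma le_Degp {p : ℕ →₀ L} {j : ℕ} (hj : j ∈ p.support) : j ≤ Degp p :=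
  Finset.le_sup (f := id) hj

lemma Degp_mem {p : ℕ →₀ L} (hp : p ≠ 0) : Degp p ∈ p.support := by
  obtain ⟨i, hi, hs⟩ := Finset.exists_mem_eq_sup p.support
    (Finsupp.support_nonempty_iff.2 hp) id
  rw [Degp, hs]; exact hi

lemma coeff_top_ne {p : ℕ →₀ L} (hp : p ≠ 0) : p (Degp p) ≠ 0 :=
  Finsupp.mem_support_iff.1 (Degp_mem hp)

lemma coeff_gt {p : ℕ →₀ L} {N : ℕ} (hN : Degp p < N) : p N = 0 := by
  by_contra h
  exact absurd (le_Degp (Finsupp.mem_support_iff.2 h)) (by omega)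

lemma Degp_eq {p : ℕ →₀ L} {d : ℕ} (h1 : p d ≠ 0) (h2 : ∀ k, d < k → p k = 0) :
    Degp p = d := by
  have hp : p ≠ 0 := fun h => h1 (by simp [h])
  have hle : Degp p ≤ d := by
    by_contra h
    exact coeff_top_ne hp (h2 _ (by omega))
  exact le_antisymm hle (le_Degp (Finsupp.mem_support_iff.2 h1))

lemma Degp_lt_of {p : ℕ →₀ L} {D : ℕ} (hp : p ≠ 0) (h : ∀ k, D ≤ k → p k = 0) :
    Degp p < D := by
  by_contra hcon
  exact coeff_top_ne hp (h _ (by omega))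

lemma mulF_apply (p q : ℕ →₀ L) (N : ℕ) : (mulF σ p q) N =
    ∑ j ∈ p.support, ∑ k ∈ q.support,
      if j + k = N then p j * (⇑σ)^[j] (q k) else 0 := by
  rw [mulF, Finsupp.sum, Finset.sum_apply']
  refine Finset.sum_congr rfl fun j _ => ?_
  rw [Finsupp.sum, Finset.sum_apply']
  refine Finset.sum_congr rfl fun k _ => ?_
  rw [Finsupp.single_apply]

lemma mulF_top (p q : ℕ →₀ L) (hp : p ≠ 0) (hq : q ≠ 0) :
    (mulF σ p q) (Degp p + Degp q) = p (Degp p) * (⇑σ)^[Degp p] (q (Degp q)) := by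
  rw [mulF_apply]
  rw [Finset.sum_eq_single (Degp p)]
  · rw [Finset.sum_eq_single (Degp q)]
    · simp
    · intro k hk hne
      have := le_Degp hk
      rw [if_neg (by omega)]
    · intro h; exact absurd (Degp_mem hq) h
  · intro j hj hne
    have hj' := le_Degp hj
    apply Finset.sum_eq_zero; intro k hk
    have := le_Degp hk
    rw [if_neg (by omega)]
  · intro h; exact absurd (Degp_mem hp) h

lemma mulF_gt (p q : ℕ →₀ L) {N : ℕ} (hN : Degp p + Degp q < N) :
    (mulF σ p q) N = 0 := by
  rw [mulF_apply]
  apply Finset.sum_eq_zero; intro j hj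
  apply Finset.sum_eq_zero; intro k hk
  have := le_Degp hj; have := le_Degp hk
  rw [if_neg (by omega)]

variable (n : ℕ)

noncomputable def Deg (f : S) : ℕ := Degp (rep.symm f)

noncomputable def lead (f : S) : L := (rep.symm f) (Deg rep f)

lemma symm_ne_zero {f : S} (hf : f ≠ 0) : rep.symm f ≠ 0 := by
  intro h
  exact hf (by simpa using congrArg rep h)

lemma lead_ne_zero {f : S} (hf : f ≠ 0) : lead rep f ≠ 0 :=
  coeff_top_ne (symm_ne_zero rep hf)

lemma coeff_gt_deg {f : S} {N : ℕ} (hN : Deg rep f < N) : (rep.symm f) N = 0 :=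
  coeff_gt hN

include hx hrep in
lemma mul_basic {f g : S} (hf : f ≠ 0) (hg : g ≠ 0) :
    f * g ≠ 0 ∧ Deg rep (f * g) = Deg rep f + Deg rep g ∧
      lead rep (f * g) = lead rep f * (⇑σ)^[Deg rep f] (lead rep g) := by
  have hp := symm_ne_zero rep hf
  have hq := symm_ne_zero rep hg
  have hsm := symm_mul σ ι x rep hx hrep f g
  have htop : (rep.symm (f * g)) (Deg rep f + Deg rep g) =
      lead rep f * (⇑σ)^[Deg rep f] (lead rep g) := by
    rw [hsm]; exact mulF_top σ _ _ hp hq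
  have hne : lead rep f * (⇑σ)^[Deg rep f] (lead rep g) ≠ 0 :=
    mul_ne_zero (lead_ne_zero rep hf) (iter_ne_zero σ _ (lead_ne_zero rep hg))
  have hfg : f * g ≠ 0 := by
    intro h
    rw [h] at htop
    simp only [map_zero, Finsupp.coe_zero, Pi.zero_apply] at htop
    exact hne htop.symm
  have hdeg : Deg rep (f * g) = Deg rep f + Deg rep g := by
    apply Degp_eq
    · rw [htop]; exact hne
    · intro k hk
      rw [hsm]; exact mulF_gt σ _ _ hk
  refine ⟨hfg, hdeg, ?_⟩
  rw [lead, hdeg, htop]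

include hx hrep in
lemma sk_mul_ne_zero {f g : S} (hf : f ≠ 0) (hg : g ≠ 0) : f * g ≠ 0 :=
  (mul_basic σ ι x rep hx hrep hf hg).1

include hx hrep in
lemma Deg_mul {f g : S} (hf : f ≠ 0) (hg : g ≠ 0) :
    Deg rep (f * g) = Deg rep f + Deg rep g :=
  (mul_basic σ ι x rep hx hrep hf hg).2.1

include hx hrep in
lemma lead_mul {f g : S} (hf : f ≠ 0) (hg : g ≠ 0) :
    lead rep (f * g) = lead rep f * (⇑σ)^[Deg rep f] (lead rep g) :=
  (mul_basic σ ι x rep hx hrep hf hg).2.2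

include hx hrep in
lemma cancel_left {f g h : S} (hf : f ≠ 0) (hfg : f * g = f * h) : g = h := by
  by_contra hne
  have : g - h ≠ 0 := sub_ne_zero.2 hne
  have := sk_mul_ne_zero σ ι x rep hx hrep hf this
  rw [mul_sub, hfg, sub_self] at this
  exact this rfl

include hx hrep in
lemma cancel_right {f g h : S} (hf : f ≠ 0) (hfg : g * f = h * f) : g = h := by
  by_contra hne
  have : g - h ≠ 0 := sub_ne_zero.2 hne
  have := sk_mul_ne_zero σ ι x rep hx hrep this hf
  rw [sub_mul, hfg, sub_self] at this
  exact this rfl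

include hrep in
lemma symm_monomial (k : ℕ) (a : L) : rep.symm (ι a * x ^ k) = Finsupp.single k a := by
  rw [← rep_single ι x rep hrep]; simp

include hrep in
lemma symm_one : rep.symm (1 : S) = Finsupp.single 0 1 := by
  have := symm_monomial ι x rep hrep 0 1
  simpa using this

include hrep in
lemma Deg_one : Deg rep (1 : S) = 0 := by
  rw [Deg, symm_one ι x rep hrep]
  apply Degp_eq <;> simp [Finsupp.single_apply]
  · intro k hk; omega

include hrep in
lemma monomial_facts {a : L} (ha : a ≠ 0) (k : ℕ) :
    (ι a * x ^ k) ≠ 0 ∧ Deg rep (ι a * x ^ k) = k ∧ lead rep (ι a * x ^ k) = a := by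
  have hs := symm_monomial ι x rep hrep k a
  have hne : rep.symm (ι a * x ^ k) ≠ 0 := by
    rw [hs]; exact fun h => ha (by simpa using (Finsupp.single_eq_zero.1 h))
  have h1 : (ι a * x ^ k) ≠ 0 := by
    intro h; rw [h] at hne; simp at hne
  have hd : Deg rep (ι a * x ^ k) = k := by
    rw [Deg, hs]
    apply Degp_eq
    · simpa using ha
    · intro j hj; rw [Finsupp.single_apply, if_neg (by omega)]
  refine ⟨h1, hd, ?_⟩
  rw [lead, hd, hs]; simp

lemma monic_ne_zero {f : S} (h : SkewMonic (⇑rep.symm) f) : f ≠ 0 := by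
  obtain ⟨d, h1, _⟩ := h
  intro hf
  rw [hf] at h1
  simp only [map_zero, Finsupp.coe_zero, Pi.zero_apply] at h1
  exact one_ne_zero h1.symm

lemma monic_deg_lead {f : S} (h : SkewMonic (⇑rep.symm) f) :
    lead rep f = 1 ∧ ∀ d, (rep.symm f) d = 1 → (∀ k, d < k → (rep.symm f) k = 0) →
      Deg rep f = d := by
  constructor
  · obtain ⟨d, h1, h2⟩ := h
    have : Deg rep f = d := Degp_eq (by rw [h1]; exact one_ne_zero) h2
    rw [lead, this, h1]
  · intro d h1 h2
    exact Degp_eq (by rw [h1]; exact one_ne_zero) h2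

lemma monic_lead {f : S} (h : SkewMonic (⇑rep.symm) f) : lead rep f = 1 :=
  (monic_deg_lead rep h).1

lemma monic_of {f : S} (h1 : f ≠ 0) (h2 : lead rep f = 1) : SkewMonic (⇑rep.symm) f :=
  ⟨Deg rep f, h2, fun k hk => coeff_gt_deg rep hk⟩

include hrep in
lemma deg_zero_eq {f : S} (hf : f ≠ 0) (hd : Deg rep f = 0) : f = ι (lead rep f) := by
  have : rep.symm f = Finsupp.single 0 (lead rep f) := by
    ext j
    rcases eq_or_ne j 0 with rfl | hj
    · rw [Finsupp.single_apply, if_pos rfl, lead, hd]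
    · rw [Finsupp.single_apply, if_neg (Ne.symm hj), coeff_gt_deg rep (by omega)]
  have h2 : rep (Finsupp.single 0 (lead rep f)) = f := by rw [← this]; simp
  conv_lhs => rw [← h2, rep_single ι x rep hrep]
  rw [pow_zero, mul_one]

include hx hrep in
lemma monic_unique {f g : S} (hf : SkewMonic (⇑rep.symm) f) (hg : SkewMonic (⇑rep.symm) g)
    (h1 : ∃ q, f = q * g) (h2 : ∃ q, g = q * f) : f = g := by
  obtain ⟨q, hq⟩ := h1
  obtain ⟨q', hq'⟩ := h2
  have hfne := monic_ne_zero rep hf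
  have hgne := monic_ne_zero rep hg
  have hqne : q ≠ 0 := by rintro rfl; rw [zero_mul] at hq; exact hfne hq
  have hq'ne : q' ≠ 0 := by rintro rfl; rw [zero_mul] at hq'; exact hgne hq'
  have hqq : (q * q') * f = 1 * f := by
    rw [one_mul, mul_assoc, ← hq', ← hq]
  have hqq1 : q * q' = 1 := cancel_right σ ι x rep hx hrep hfne hqq
  have hdq : Deg rep q = 0 := by
    have := Deg_mul σ ι x rep hx hrep hqne hq'ne
    rw [hqq1, Deg_one ι x rep hrep] at this
    omega
  have hlq : lead rep q = 1 := by
    have := lead_mul σ ι x rep hx hrep hqne hgne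
    rw [← hq, hdq] at this
    simp at this
    rw [monic_lead rep hf, monic_lead rep hg, mul_one] at this
    exact this.symm
  have : q = 1 := by
    rw [deg_zero_eq ι x rep hrep hqne hdq, hlq, map_one]
  rw [hq, this, one_mul]

include hx hrep in
lemma central_xn (hσn : ∀ a : L, (⇑σ)^[n] a = a) :
    ∀ s : S, (x ^ n - 1) * s = s * (x ^ n - 1) := by
  apply s_induction ι x rep hrep
  · simp
  · intro a j
    rw [sub_mul, mul_sub, one_mul, mul_one]
    have : x ^ n * (ι a * x ^ j) = ι a * x ^ j * x ^ n := by
      rw [← mul_assoc, xpow_mul_ι σ ι x hx, hσn, mul_assoc, mul_assoc, ← pow_add,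
        ← pow_add, Nat.add_comm]
    rw [this]
  · intro s t hs ht
    rw [mul_add, add_mul, hs, ht]

include hx hrep in
lemma central_flip {z A B : S} (hc : ∀ s, z * s = s * z) (hAB : z = A * B)
    (hB : B ≠ 0) : z = B * A := by
  have h1 : (A * B) * B = (B * A) * B := by
    rw [← hAB, hc B, hAB, mul_assoc]
  exact hAB.trans (cancel_right σ ι x rep hx hrep hB h1)

lemma iter_fixed {c : L} (hc : σ c = c) (j : ℕ) : (⇑σ)^[j] c = c := by
  induction j with
  | zero => rfl
  | succ j ih => rw [Function.iterate_succ_apply', ih, hc]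

lemma iter_map_add (j : ℕ) (a b : L) : (⇑σ)^[j] (a + b) = (⇑σ)^[j] a + (⇑σ)^[j] b := by
  induction j generalizing a b with
  | zero => rfl
  | succ j ih => rw [Function.iterate_succ_apply', Function.iterate_succ_apply',
      Function.iterate_succ_apply', ih, map_add]

lemma iter_map_inv (j : ℕ) (a : L) : (⇑σ)^[j] a⁻¹ = ((⇑σ)^[j] a)⁻¹ := by
  induction j generalizing a with
  | zero => rfl
  | succ j ih => rw [Function.iterate_succ_apply, Function.iterate_succ_apply, ← ih,
      map_inv₀]

noncomputable def hatS (f : S) : L → L :=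
  fun v => ∑ j ∈ (rep.symm f).support, (rep.symm f) j * (⇑σ)^[j] v

lemma hat_eq_sum {f : S} {t : Finset ℕ} (h : (rep.symm f).support ⊆ t) (v : L) :
    hatS σ rep f v = ∑ j ∈ t, (rep.symm f) j * (⇑σ)^[j] v := by
  rw [hatS]
  exact Finset.sum_subset h (by
    intro j _ hj
    rw [Finsupp.notMem_support_iff.1 hj, zero_mul])

include hrep in
lemma hat_monomial (a : L) (j : ℕ) (v : L) :
    hatS σ rep (ι a * x ^ j) v = a * (⇑σ)^[j] v := by
  rcases eq_or_ne a 0 with rfl | ha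
  · simp [hatS, map_zero, zero_mul]
  · rw [hatS, symm_monomial ι x rep hrep, Finsupp.support_single_ne_zero _ ha]
    simp

lemma hat_add (f g : S) (v : L) :
    hatS σ rep (f + g) v = hatS σ rep f v + hatS σ rep g v := by
  have hsub : (rep.symm (f + g)).support ⊆
      (rep.symm f).support ∪ (rep.symm g).support := by
    rw [map_add]; exact Finsupp.support_add
  rw [hat_eq_sum σ rep hsub,
    hat_eq_sum σ rep (Finset.subset_union_left (s₂ := (rep.symm g).support)),
    hat_eq_sum σ rep (Finset.subset_union_right (s₁ := (rep.symm f).support)),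
    ← Finset.sum_add_distrib]
  refine Finset.sum_congr rfl fun j _ => ?_
  rw [map_add, Finsupp.add_apply, add_mul]

lemma hat_zero (v : L) : hatS σ rep (0 : S) v = 0 := by
  simp [hatS]

lemma hat_sub (f g : S) (v : L) :
    hatS σ rep (f - g) v = hatS σ rep f v - hatS σ rep g v := by
  have := hat_add σ rep (f - g) g v
  rw [sub_add_cancel] at this
  rw [this]; ring

lemma hat_at_zero (f : S) : hatS σ rep f 0 = 0 := by
  rw [hatS]
  exact Finset.sum_eq_zero fun j _ => by rw [iter_map_zero, mul_zero]

lemma hat_v_add (f : S) (v w : L) :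
    hatS σ rep f (v + w) = hatS σ rep f v + hatS σ rep f w := by
  rw [hatS, hatS, hatS, ← Finset.sum_add_distrib]
  refine Finset.sum_congr rfl fun j _ => ?_
  rw [iter_map_add, mul_add]

lemma hat_smul (f : S) {c : L} (hc : σ c = c) (v : L) :
    hatS σ rep f (c * v) = c * hatS σ rep f v := by
  rw [hatS, hatS, Finset.mul_sum]
  refine Finset.sum_congr rfl fun j _ => ?_
  rw [iter_map_mul, iter_fixed σ hc]
  ring

include hx hrep in
lemma hat_mul (f g : S) (v : L) :
    hatS σ rep (f * g) v = hatS σ rep f (hatS σ rep g v) := by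
  induction f using s_induction ι x rep hrep with
  | h0 => rw [zero_mul, hat_zero, hat_zero]
  | hm a j =>
    induction g using s_induction ι x rep hrep with
    | h0 => rw [mul_zero, hat_zero, hat_at_zero]
    | hm b k =>
      rw [mono_mul σ ι x hx, hat_monomial σ ι x rep hrep,
        hat_monomial σ ι x rep hrep, hat_monomial σ ι x rep hrep,
        iter_map_mul, Function.iterate_add_apply, mul_assoc]
    | hadd s t hs ht =>
      rw [mul_add, hat_add, hat_add, hat_v_add, hs, ht]
  | hadd s t hs ht =>
    rw [add_mul, hat_add, hat_add, hs, ht]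

include hrep in
lemma hat_x (v : L) : hatS σ rep x v = σ v := by
  have := hat_monomial σ ι x rep hrep 1 1 v
  simpa using this

include hrep in
lemma hat_xpow (k : ℕ) (v : L) : hatS σ rep (x ^ k) v = (⇑σ)^[k] v := by
  have := hat_monomial σ ι x rep hrep 1 k v
  simpa using this

include hrep in
lemma hat_linear (a : L) (v : L) : hatS σ rep (x - ι a) v = σ v - a * v := by
  have h1 : hatS σ rep (ι a) v = a * v := by
    have := hat_monomial σ ι x rep hrep a 0 v
    simpa using this
  rw [hat_sub, hat_x σ ι x rep hrep, h1]

include hrep in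
lemma hat_xn_sub_one (hσn : ∀ a : L, (⇑σ)^[n] a = a) (v : L) :
    hatS σ rep (x ^ n - 1) v = 0 := by
  have h1 : hatS σ rep (1 : S) v = v := by
    have := hat_monomial σ ι x rep hrep 1 0 v
    simpa using this
  rw [hat_sub, h1, hat_xpow σ ι x rep hrep, hσn, sub_self]

include hx hrep in
lemma div_linear (a : L) (f : S) : ∃ q r, f = q * (x - ι a) + ι r := by
  induction f using s_induction ι x rep hrep with
  | h0 => exact ⟨0, 0, by simp⟩
  | hm b j =>
    induction j generalizing b with
    | zero => exact ⟨0, b, by simp⟩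
    | succ j ih =>
      obtain ⟨q, r, hqr⟩ := ih (b * (⇑σ)^[j] a)
      refine ⟨ι b * x ^ j + q, r, ?_⟩
      have h1 : ι b * x ^ (j + 1) = (ι b * x ^ j) * (x - ι a) + ι (b * (⇑σ)^[j] a) * x ^ j := by
        rw [mul_sub, mul_assoc, ← pow_succ]
        have : (ι b * x ^ j) * ι a = ι (b * (⇑σ)^[j] a) * x ^ j := by
          have := mono_mul σ ι x hx j 0 b a
          simpa using this
        rw [this, sub_add_cancel]
      rw [h1, hqr]; noncomm_ring
  | hadd s t hs ht =>
    obtain ⟨q1, r1, h1⟩ := hs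
    obtain ⟨q2, r2, h2⟩ := ht
    exact ⟨q1 + q2, r1 + r2, by rw [h1, h2, map_add]; noncomm_ring⟩

include hx hrep in
lemma hroot {d : L} (hd : d ≠ 0) (f : S) :
    (∃ q, f = q * (x - ι (σ d * d⁻¹))) ↔ hatS σ rep f d = 0 := by
  constructor
  · rintro ⟨q, rfl⟩
    rw [hat_mul σ ι x rep hx hrep, hat_linear σ ι x rep hrep,
      mul_assoc, inv_mul_cancel₀ hd, mul_one, sub_self, hat_at_zero]
  · intro h
    obtain ⟨q, r, hqr⟩ := div_linear σ ι x rep hx hrep (σ d * d⁻¹) f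
    have hr : hatS σ rep (ι r) d = r * d := by
      have := hat_monomial σ ι x rep hrep r 0 d
      simpa using this
    rw [hqr, hat_add, hat_mul σ ι x rep hx hrep, hat_linear σ ι x rep hrep,
      mul_assoc, inv_mul_cancel₀ hd, mul_one, sub_self, hat_at_zero, hr] at h
    rw [zero_add] at h
    have : r = 0 := by
      rcases mul_eq_zero.1 h with h' | h'
      · exact h'
      · exact absurd h' hd
    exact ⟨q, by rw [hqr, this, map_zero, add_zero]⟩

include hrep in
lemma linear_facts (a : L) : (x - ι a) ≠ 0 ∧ Deg rep (x - ι a) = 1 ∧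
    lead rep (x - ι a) = 1 ∧ SkewMonic (⇑rep.symm) (x - ι a) := by
  have hsy : rep.symm (x - ι a) = Finsupp.single 1 1 - Finsupp.single 0 a := by
    apply rep.injective
    simp only [AddEquiv.apply_symm_apply, map_sub]
    rw [rep_single ι x rep hrep, rep_single ι x rep hrep]
    simp
  have hc1 : (rep.symm (x - ι a)) 1 = 1 := by
    rw [hsy, Finsupp.sub_apply, Finsupp.single_apply, Finsupp.single_apply,
      if_pos rfl, if_neg (by omega), sub_zero]
  have hck : ∀ k, 1 < k → (rep.symm (x - ι a)) k = 0 := by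
    intro k hk
    rw [hsy, Finsupp.sub_apply, Finsupp.single_apply, Finsupp.single_apply,
      if_neg (by omega), if_neg (by omega), sub_zero]
  have hne : (x - ι a) ≠ 0 := by
    intro h
    rw [h] at hc1
    simp at hc1
  have hdeg : Deg rep (x - ι a) = 1 := Degp_eq (by rw [hc1]; exact one_ne_zero) hck
  have hlead : lead rep (x - ι a) = 1 := by rw [lead, hdeg, hc1]
  exact ⟨hne, hdeg, hlead, monic_of rep hne hlead⟩

include hrep in
lemma xn_facts (hn : 0 < n) : (x ^ n - 1 : S) ≠ 0 ∧ Deg rep (x ^ n - 1 : S) = n ∧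
    lead rep (x ^ n - 1 : S) = 1 ∧ SkewMonic (⇑rep.symm) (x ^ n - 1 : S) := by
  have hsy : rep.symm (x ^ n - 1 : S) = Finsupp.single n 1 - Finsupp.single 0 1 := by
    apply rep.injective
    simp only [AddEquiv.apply_symm_apply, map_sub]
    rw [rep_single ι x rep hrep, rep_single ι x rep hrep]
    simp
  have hc1 : (rep.symm (x ^ n - 1 : S)) n = 1 := by
    rw [hsy, Finsupp.sub_apply, Finsupp.single_apply, Finsupp.single_apply,
      if_pos rfl, if_neg (by omega), sub_zero]
  have hck : ∀ k, n < k → (rep.symm (x ^ n - 1 : S)) k = 0 := by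
    intro k hk
    rw [hsy, Finsupp.sub_apply, Finsupp.single_apply, Finsupp.single_apply,
      if_neg (by omega), if_neg (by omega), sub_zero]
  have hne : (x ^ n - 1 : S) ≠ 0 := by
    intro h
    rw [h] at hc1
    simp at hc1
  have hdeg : Deg rep (x ^ n - 1 : S) = n := Degp_eq (by rw [hc1]; exact one_ne_zero) hck
  have hlead : lead rep (x ^ n - 1 : S) = 1 := by rw [lead, hdeg, hc1]
  exact ⟨hne, hdeg, hlead, monic_of rep hne hlead⟩

include hx hrep in
lemma monic_div (u : S) (hu : SkewMonic (⇑rep.symm) u) :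
    ∀ s : S, ∃ q r, s = u * q + r ∧ (r = 0 ∨ Deg rep r < Deg rep u) := by
  have hune := monic_ne_zero rep hu
  have hul := monic_lead rep hu
  suffices h : ∀ D : ℕ, ∀ s : S, s ≠ 0 → Deg rep s ≤ D →
      ∃ q r, s = u * q + r ∧ (r = 0 ∨ Deg rep r < Deg rep u) by
    intro s
    rcases eq_or_ne s 0 with rfl | hs
    · exact ⟨0, 0, by simp, Or.inl rfl⟩
    · exact h (Deg rep s) s hs le_rfl
  intro D
  induction D with
  | zero =>
    intro s hs hD
    rcases Nat.lt_or_ge (Deg rep s) (Deg rep u) with hlt | hge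
    · exact ⟨0, s, by simp, Or.inr hlt⟩
    · -- Deg u = 0, Deg s = 0
      have hds : Deg rep s = 0 := Nat.le_zero.1 hD
      have hdu : Deg rep u = 0 := by omega
      refine ⟨ι (lead rep s), 0, ?_, Or.inl rfl⟩
      rw [add_zero, deg_zero_eq ι x rep hrep hune hdu, hul, map_one, one_mul]
      exact deg_zero_eq ι x rep hrep hs hds
  | succ D ih =>
    intro s hs hD
    rcases Nat.lt_or_ge (Deg rep s) (Deg rep u) with hlt | hge
    · exact ⟨0, s, by simp, Or.inr hlt⟩
    · set e := Deg rep s - Deg rep u with he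
      set c := (⇑σ.symm)^[Deg rep u] (lead rep s) with hc
      have hcne : c ≠ 0 := by
        rw [hc]
        intro h
        have := congrArg ((⇑σ)^[Deg rep u]) h
        rw [iter_map_zero] at this
        rw [Function.LeftInverse.iterate σ.apply_symm_apply (Deg rep u) (lead rep s)] at this
        exact lead_ne_zero rep hs this
      have hmon := monomial_facts ι x rep hrep hcne e
      have hprod := mul_basic σ ι x rep hx hrep hune hmon.1
      have hdprod : Deg rep (u * (ι c * x ^ e)) = Deg rep s := by
        rw [hprod.2.1, hmon.2.1]; omega
      have hlprod : lead rep (u * (ι c * x ^ e)) = lead rep s := by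
        rw [hprod.2.2, hul, one_mul, hmon.2.2, hc,
          Function.LeftInverse.iterate σ.apply_symm_apply (Deg rep u) (lead rep s)]
      set s' := s - u * (ι c * x ^ e) with hs'
      have hcoeff : ∀ N, Deg rep s ≤ N → (rep.symm s') N = 0 := by
        intro N hN
        rw [hs', map_sub, Finsupp.sub_apply]
        rcases Nat.eq_or_lt_of_le hN with rfl | hNlt
        · rw [← lead, ← hdprod, ← lead, hlprod, sub_self]
        · rw [coeff_gt_deg rep hNlt, coeff_gt_deg rep (by omega), sub_self]
      rcases eq_or_ne s' 0 with hz | hnz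
      · refine ⟨ι c * x ^ e, 0, ?_, Or.inl rfl⟩
        rw [hs'] at hz
        rw [add_zero]
        exact sub_eq_zero.1 hz
      · have hdlt : Deg rep s' < Deg rep s :=
          Degp_lt_of (symm_ne_zero rep hnz) hcoeff
        obtain ⟨q, r, hqr, hr⟩ := ih s' hnz (by omega)
        refine ⟨ι c * x ^ e + q, r, ?_, hr⟩
        rw [mul_add, add_assoc, ← hqr, hs']
        abel

noncomputable def Etw (f : S) : S := rep (Finsupp.mapRange ⇑σ (map_zero σ) (rep.symm f))

lemma E_symm (f : S) : rep.symm (Etw σ rep f) = Finsupp.mapRange ⇑σ (map_zero σ) (rep.symm f) := by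
  rw [Etw]; simp

include hrep in
lemma E_monomial (a : L) (j : ℕ) : Etw σ rep (ι a * x ^ j) = ι (σ a) * x ^ j := by
  rw [Etw, symm_monomial ι x rep hrep, Finsupp.mapRange_single, rep_single ι x rep hrep]

lemma E_add (f g : S) : Etw σ rep (f + g) = Etw σ rep f + Etw σ rep g := by
  rw [Etw, Etw, Etw, map_add, Finsupp.mapRange_add (map_add σ), map_add]

lemma E_sub (f g : S) : Etw σ rep (f - g) = Etw σ rep f - Etw σ rep g := by
  have h := E_add σ rep (f - g) g
  rw [sub_add_cancel] at h
  rw [h]; abel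

lemma E_zero : Etw σ rep (0 : S) = 0 := by
  rw [Etw]; simp

include hx hrep in
lemma E_mul (f g : S) : Etw σ rep (f * g) = Etw σ rep f * Etw σ rep g := by
  induction f using s_induction ι x rep hrep with
  | h0 => rw [zero_mul, E_zero, zero_mul]
  | hm a j =>
    induction g using s_induction ι x rep hrep with
    | h0 => rw [mul_zero, E_zero, mul_zero]
    | hm b k =>
      rw [mono_mul σ ι x hx, E_monomial σ ι x rep hrep, E_monomial σ ι x rep hrep,
        E_monomial σ ι x rep hrep, mono_mul σ ι x hx]
      congr 2
      rw [map_mul]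
      congr 1
      rw [← Function.iterate_succ_apply, Function.iterate_succ_apply']
    | hadd s t hs ht =>
      rw [mul_add, E_add, E_add, hs, ht, mul_add]
  | hadd s t hs ht =>
    rw [add_mul, E_add, E_add, hs, ht, add_mul]

include hrep in
lemma Eiter_monomial (i : ℕ) (a : L) (j : ℕ) :
    (Etw σ rep)^[i] (ι a * x ^ j) = ι ((⇑σ)^[i] a) * x ^ j := by
  induction i generalizing a with
  | zero => rfl
  | succ i ih =>
    rw [Function.iterate_succ_apply, E_monomial σ ι x rep hrep, ih,
      Function.iterate_succ_apply]

include hrep in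
lemma Eiter_iota (i : ℕ) (a : L) : (Etw σ rep)^[i] (ι a) = ι ((⇑σ)^[i] a) := by
  have := Eiter_monomial σ ι x rep hrep i a 0
  simpa using this

include hx hrep in
lemma Eiter_mul (i : ℕ) (f g : S) :
    (Etw σ rep)^[i] (f * g) = (Etw σ rep)^[i] f * (Etw σ rep)^[i] g := by
  induction i generalizing f g with
  | zero => rfl
  | succ i ih =>
    rw [Function.iterate_succ_apply, E_mul σ ι x rep hx hrep, ih,
      Function.iterate_succ_apply, Function.iterate_succ_apply]

lemma Eiter_sub (i : ℕ) (f g : S) :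
    (Etw σ rep)^[i] (f - g) = (Etw σ rep)^[i] f - (Etw σ rep)^[i] g := by
  induction i generalizing f g with
  | zero => rfl
  | succ i ih =>
    rw [Function.iterate_succ_apply, E_sub, ih, Function.iterate_succ_apply,
      Function.iterate_succ_apply]

include hrep in
lemma Eiter_x (i : ℕ) : (Etw σ rep)^[i] x = x := by
  have h1 : (x : S) = ι 1 * x ^ 1 := by simp
  rw [h1, Eiter_monomial σ ι x rep hrep, iter_map_one]

include hrep in
lemma Eiter_xpow (i j : ℕ) : (Etw σ rep)^[i] (x ^ j) = x ^ j := by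
  have h1 : (x ^ j : S) = ι 1 * x ^ j := by simp
  rw [h1, Eiter_monomial σ ι x rep hrep, iter_map_one]

include hrep in
lemma Eiter_one (i : ℕ) : (Etw σ rep)^[i] (1 : S) = 1 := by
  have := Eiter_xpow σ ι x rep hrep i 0
  simpa using this

include hrep in
lemma Eiter_linear (i : ℕ) (a : L) :
    (Etw σ rep)^[i] (x - ι a) = x - ι ((⇑σ)^[i] a) := by
  rw [Eiter_sub, Eiter_x σ ι x rep hrep, Eiter_iota σ ι x rep hrep]

include hrep in
lemma Eiter_xn_sub_one (i : ℕ) :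
    (Etw σ rep)^[i] (x ^ n - 1 : S) = x ^ n - 1 := by
  rw [Eiter_sub, Eiter_xpow σ ι x rep hrep, Eiter_one σ ι x rep hrep]

lemma hat_E (f : S) (v : L) :
    hatS σ rep (Etw σ rep f) v = σ (hatS σ rep f (σ.symm v)) := by
  have hsub : (rep.symm (Etw σ rep f)).support ⊆ (rep.symm f).support := by
    rw [E_symm]
    exact Finsupp.support_mapRange
  rw [hat_eq_sum σ rep hsub, hatS, map_sum]
  refine Finset.sum_congr rfl fun j _ => ?_
  rw [E_symm, Finsupp.mapRange_apply, map_mul]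
  congr 1
  rw [← Function.iterate_succ_apply' σ, Function.iterate_succ_apply,
    RingEquiv.apply_symm_apply]

lemma hat_Eiter (i : ℕ) (f : S) (v : L) :
    hatS σ rep ((Etw σ rep)^[i] f) v = (⇑σ)^[i] (hatS σ rep f ((⇑σ.symm)^[i] v)) := by
  induction i generalizing v with
  | zero => rfl
  | succ i ih =>
    rw [Function.iterate_succ_apply', hat_E, ih, ← Function.iterate_succ_apply' σ]
    congr 1

lemma iter_map_sub (j : ℕ) (a b : L) : (⇑σ)^[j] (a - b) = (⇑σ)^[j] a - (⇑σ)^[j] b := by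
  induction j generalizing a b with
  | zero => rfl
  | succ j ih => rw [Function.iterate_succ_apply', Function.iterate_succ_apply',
      Function.iterate_succ_apply', ih, map_sub]

noncomputable def fixedK (σ : L ≃+* L) : Subfield L where
  carrier := {a | σ a = a}
  mul_mem' := by intro a b ha hb; simp only [Set.mem_setOf_eq] at *; rw [map_mul, ha, hb]
  one_mem' := by simp only [Set.mem_setOf_eq]; exact map_one σ
  add_mem' := by intro a b ha hb; simp only [Set.mem_setOf_eq] at *; rw [map_add, ha, hb]
  zero_mem' := by simp only [Set.mem_setOf_eq]; exact map_zero σ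
  neg_mem' := by intro a ha; simp only [Set.mem_setOf_eq] at *; rw [map_neg, ha]
  inv_mem' := by intro a ha; simp only [Set.mem_setOf_eq] at *; rw [map_inv₀, ha]

lemma fixedK_smul (c : fixedK σ) (v : L) : c • v = (c : L) * v := rfl

lemma op_div (d : ℕ) (b : ℕ → L) (a : L) :
    ∃ (q : ℕ → L) (r : L), ∀ v : L,
      ∑ j ∈ Finset.range (d + 1), b j * (⇑σ)^[j] v =
        (∑ j ∈ Finset.range d, q j * (⇑σ)^[j] (σ v - a * v)) + r * v := by
  induction d generalizing b with
  | zero => exact ⟨0, b 0, fun v => by simp⟩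
  | succ d ih =>
    obtain ⟨q, r, hq⟩ := ih (Function.update b d (b d + b (d + 1) * (⇑σ)^[d] a))
    refine ⟨Function.update q d (b (d + 1)), r, fun v => ?_⟩
    have key := hq v
    have e1 : ∑ j ∈ Finset.range (d + 1),
        Function.update b d (b d + b (d + 1) * (⇑σ)^[d] a) j * (⇑σ)^[j] v
        = (∑ j ∈ Finset.range d, b j * (⇑σ)^[j] v)
          + (b d + b (d + 1) * (⇑σ)^[d] a) * (⇑σ)^[d] v := by
      rw [Finset.sum_range_succ, Function.update_self]
      congr 1
      refine Finset.sum_congr rfl fun j hj => ?_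
      rw [Finset.mem_range] at hj
      rw [Function.update_of_ne (by omega)]
    have e2 : ∑ j ∈ Finset.range (d + 1),
        Function.update q d (b (d + 1)) j * (⇑σ)^[j] (σ v - a * v)
        = (∑ j ∈ Finset.range d, q j * (⇑σ)^[j] (σ v - a * v))
          + b (d + 1) * (⇑σ)^[d] (σ v - a * v) := by
      rw [Finset.sum_range_succ, Function.update_self]
      congr 1
      refine Finset.sum_congr rfl fun j hj => ?_
      rw [Finset.mem_range] at hj
      rw [Function.update_of_ne (by omega)]
    have e3 : (⇑σ)^[d] (σ v - a * v) = (⇑σ)^[d + 1] v - (⇑σ)^[d] a * (⇑σ)^[d] v := by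
      rw [iter_map_sub, iter_map_mul, ← Function.iterate_succ_apply]
    rw [e1] at key
    rw [Finset.sum_range_succ (f := fun j => b j * (⇑σ)^[j] v) (n := d + 1),
      Finset.sum_range_succ (f := fun j => b j * (⇑σ)^[j] v) (n := d), e2, e3]
    linear_combination key

lemma ker_bound : ∀ (d : ℕ) (T : L → L),
    (∃ b : ℕ → L, ∀ v, T v = ∑ j ∈ Finset.range (d + 1), b j * (⇑σ)^[j] v) →
    (∃ w, T w ≠ 0) → ∀ v : Fin (d + 1) → L, (∀ i, T (v i) = 0) →
    ¬ LinearIndependent (fixedK σ) v := by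
  intro d
  induction d with
  | zero =>
    rintro T ⟨b, hb⟩ ⟨w, hw⟩ v hv hli
    have hb0 : b 0 ≠ 0 := by
      intro h
      exact hw (by rw [hb, Finset.sum_range_one, h, zero_mul])
    have h0 : v 0 = 0 := by
      have := hv 0
      rw [hb, Finset.sum_range_one] at this
      rcases mul_eq_zero.1 this with h | h
      · exact absurd h hb0
      · exact h
    exact hli.ne_zero 0 h0
  | succ d ih =>
    rintro T ⟨b, hb⟩ hw v hv hli
    have hv0 : v 0 ≠ 0 := hli.ne_zero 0
    set a := σ (v 0) * (v 0)⁻¹ with ha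
    have hav0 : a * v 0 = σ (v 0) := by
      rw [ha, mul_assoc, inv_mul_cancel₀ hv0, mul_one]
    obtain ⟨q, r, hq⟩ := op_div σ (d + 1) b a
    have hTeq : ∀ w, T w = (∑ j ∈ Finset.range (d + 1), q j * (⇑σ)^[j] (σ w - a * w)) + r * w := by
      intro w; rw [hb, hq]
    have hr : r = 0 := by
      have h1 := hTeq (v 0)
      rw [hv 0] at h1
      have h2 : σ (v 0) - a * v 0 = 0 := by rw [hav0, sub_self]
      rw [h2] at h1
      have h3 : ∀ j ∈ Finset.range (d + 1), q j * (⇑σ)^[j] (0 : L) = 0 := by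
        intro j _; rw [iter_map_zero, mul_zero]
      rw [Finset.sum_congr rfl h3, Finset.sum_const, smul_zero, zero_add] at h1
      rcases mul_eq_zero.1 h1.symm with h | h
      · exact h
      · exact absurd h hv0
    set Q : L → L := fun w => ∑ j ∈ Finset.range (d + 1), q j * (⇑σ)^[j] w with hQdef
    have hTQ : ∀ w, T w = Q (σ w - a * w) := by
      intro w
      rw [hTeq, hr, zero_mul, add_zero]
    by_cases hQ0 : ∀ w', Q w' = 0
    · obtain ⟨w, hwne⟩ := hw
      exact hwne (by rw [hTQ, hQ0])
    · push_neg at hQ0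
      set u : Fin (d + 1) → L := fun i => σ (v i.succ) - a * v i.succ with hu
      have hTu : ∀ i, Q (u i) = 0 := by
        intro i
        rw [hu]
        have := hv i.succ
        rw [hTQ] at this
        exact this
      have hindep : LinearIndependent (fixedK σ) u := by
        rw [Fintype.linearIndependent_iff]
        intro g hg
        set w : L := ∑ i, (g i : L) * v i.succ with hwdef
        have hσw : σ w - a * w = 0 := by
          rw [hwdef, map_sum, Finset.mul_sum, ← Finset.sum_sub_distrib]
          rw [← hg]
          refine Finset.sum_congr rfl fun i _ => ?_
          rw [fixedK_smul, hu]
          have hgK : σ (g i : L) = (g i : L) := (g i).2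
          rw [map_mul, hgK]
          ring
        -- dependence on v
        have hdep : ∀ h : Fin (d + 2) → fixedK σ,
            (∑ i, (h i : L) * v i = 0) → ∀ i, h i = 0 := by
          intro h hh
          have := Fintype.linearIndependent_iff.1 hli h (by
            rw [← hh]
            refine Finset.sum_congr rfl fun i _ => ?_
            rw [fixedK_smul])
          exact this
        rcases eq_or_ne w 0 with hw0 | hwne
        · have := hdep (Fin.cons 0 g) (by
            rw [Fin.sum_univ_succ]
            simp only [Fin.cons_zero, Fin.cons_succ]
            rw [← hwdef]  -- leftover
            simpa using hw0)
          intro i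
          have := this i.succ
          rwa [Fin.cons_succ] at this
        · have hane : a ≠ 0 := by
            rw [ha]
            apply mul_ne_zero _ (inv_ne_zero hv0)
            intro h
            exact hv0 (σ.injective (by rw [h, map_zero]))
          have hμK : σ (w * (v 0)⁻¹) = w * (v 0)⁻¹ := by
            have hσweq : σ w = a * w := sub_eq_zero.1 hσw
            rw [map_mul, map_inv₀, hσweq, ← hav0]
            field_simp
          have := hdep (Fin.cons ⟨-(w * (v 0)⁻¹), by
              show σ (-(w * (v 0)⁻¹)) = -(w * (v 0)⁻¹)
              rw [map_neg, hμK]⟩ g) (by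
            rw [Fin.sum_univ_succ]
            simp only [Fin.cons_zero, Fin.cons_succ]
            rw [← hwdef]
            field_simp
            ring)
          intro i
          have h2 := this i.succ
          rwa [Fin.cons_succ] at h2
      exact ih Q ⟨q, fun _ => rfl⟩ hQ0 u hTu hindep

lemma normal_basis_indep (n : ℕ) (α : L)
    (hα : ∀ a : L, ∃! c : Fin n → L,
      (∀ i, σ (c i) = c i) ∧ a = ∑ i : Fin n, c i * (⇑σ)^[(i : ℕ)] α) :
    LinearIndependent (fixedK σ) (fun i : Fin n => (⇑σ)^[(i : ℕ)] α) := by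
  rw [Fintype.linearIndependent_iff]
  intro g hg
  obtain ⟨c, _, hun⟩ := hα 0
  have h1 : (fun i => (g i : L)) = c := hun _ ⟨fun i => (g i).2, by
    rw [← hg]
    refine Finset.sum_congr rfl fun i _ => ?_
    rw [fixedK_smul]⟩
  have h2 : (fun _ : Fin n => (0 : L)) = c := hun _ ⟨fun i => map_zero σ, by simp⟩
  intro i
  have := congrFun (h1.trans h2.symm) i
  exact Subtype.ext this

lemma normal_basis_span (n : ℕ) (α : L)
    (hα : ∀ a : L, ∃! c : Fin n → L,
      (∀ i, σ (c i) = c i) ∧ a = ∑ i : Fin n, c i * (⇑σ)^[(i : ℕ)] α) :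
    ⊤ ≤ Submodule.span (fixedK σ) (Set.range (fun i : Fin n => (⇑σ)^[(i : ℕ)] α)) := by
  intro a _
  obtain ⟨c, ⟨hcinv, hcsum⟩, _⟩ := hα a
  rw [hcsum]
  refine Submodule.sum_mem _ fun i _ => ?_
  have : c i * (⇑σ)^[(i : ℕ)] α = (⟨c i, hcinv i⟩ : fixedK σ) • (⇑σ)^[(i : ℕ)] α := rfl
  rw [this]
  exact Submodule.smul_mem _ _ (Submodule.subset_span ⟨i, rfl⟩)

set_option maxHeartbeats 1000000 in
set_option synthInstance.maxHeartbeats 1000000 in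
lemma exists_ker_indep (n k : ℕ) (hn : 0 < n) (hk : k ≤ n - 1) (α : L)
    (hα : ∀ a : L, ∃! c : Fin n → L,
      (∀ i, σ (c i) = c i) ∧ a = ∑ i : Fin n, c i * (⇑σ)^[(i : ℕ)] α)
    (F : L →ₗ[fixedK σ] L)
    (hrange : ∀ v : L, F v ∈ Submodule.span (fixedK σ)
      (Set.range (fun j : Fin (n - 1 - k) => (⇑σ)^[k + 1 + (j : ℕ)] α))) :
    ∃ v : Fin (k + 1) → L, LinearIndependent (fixedK σ) v ∧ ∀ i, F (v i) = 0 := by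
  classical
  let B : Module.Basis (Fin n) (fixedK σ) L := Module.Basis.mk (normal_basis_indep σ n α hα)
    (normal_basis_span σ n α hα)
  have hfd : FiniteDimensional (fixedK σ) L := Module.Finite.of_basis B
  have hfr : Module.finrank (fixedK σ) L = n := by
    rw [Module.finrank_eq_card_basis B, Fintype.card_fin]
  have hrle : LinearMap.range F ≤ Submodule.span (fixedK σ)
      (Set.range (fun j : Fin (n - 1 - k) => (⇑σ)^[k + 1 + (j : ℕ)] α)) := by
    rintro y ⟨v, rfl⟩
    exact hrange v
  have h1 : Module.finrank (fixedK σ) ↥(LinearMap.range F) ≤ n - 1 - k := by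
    calc Module.finrank (fixedK σ) ↥(LinearMap.range F)
        ≤ Module.finrank (fixedK σ) ↥(Submodule.span (fixedK σ)
          (Set.range (fun j : Fin (n - 1 - k) => (⇑σ)^[k + 1 + (j : ℕ)] α))) :=
          Submodule.finrank_mono hrle
      _ ≤ (Set.range (fun j : Fin (n - 1 - k) => (⇑σ)^[k + 1 + (j : ℕ)] α)).toFinset.card :=
          finrank_span_le_card _
      _ ≤ n - 1 - k := by
          rw [Set.toFinset_card]
          calc Fintype.card ↥(Set.range (fun j : Fin (n - 1 - k) => (⇑σ)^[k + 1 + (j : ℕ)] α))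
              ≤ Fintype.card (Fin (n - 1 - k)) := Fintype.card_range_le _
            _ = n - 1 - k := Fintype.card_fin _
  have h2 := LinearMap.finrank_range_add_finrank_ker F
  rw [hfr] at h2
  have hker : k + 1 ≤ Module.finrank (fixedK σ) ↥(LinearMap.ker F) := by omega
  let Bk := Module.finBasis (fixedK σ) ↥(LinearMap.ker F)
  refine ⟨fun i => (Bk (Fin.castLE hker i) : L), ?_, ?_⟩
  · have hind := Bk.linearIndependent.map' (LinearMap.ker F).subtype
      (Submodule.ker_subtype _)
    exact hind.comp (Fin.castLE hker) (Fin.castLE_injective hker)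
  · intro i
    exact LinearMap.mem_ker.1 (Bk (Fin.castLE hker i)).2

lemma hat_v_sum (f : S) {ι' : Type*} (s : Finset ι') (u : ι' → L) :
    hatS σ rep f (∑ i ∈ s, u i) = ∑ i ∈ s, hatS σ rep f (u i) := by
  classical
  induction s using Finset.cons_induction with
  | empty => simpa using hat_at_zero σ rep f
  | cons a s ha ih => rw [Finset.sum_cons, Finset.sum_cons, hat_v_add, ih]

lemma symm_iter_apply (m : ℕ) (v : L) : (⇑σ.symm)^[m] ((⇑σ)^[m] v) = v :=
  (Function.LeftInverse.iterate σ.symm_apply_apply m) v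

lemma iter_symm_apply (m : ℕ) (v : L) : (⇑σ)^[m] ((⇑σ.symm)^[m] v) = v :=
  (Function.LeftInverse.iterate σ.apply_symm_apply m) v

lemma symm_iter_eq {n : ℕ} (hσn : ∀ a : L, (⇑σ)^[n] a = a) (m : ℕ) (hm : m ≤ n) (v : L) :
    (⇑σ.symm)^[m] v = (⇑σ)^[n - m] v := by
  apply iter_inj σ m
  rw [iter_symm_apply, ← Function.iterate_add_apply]
  have hmn : m + (n - m) = n := by omega
  rw [hmn, hσn]

lemma beta_conj (β α : L) (hβ : β = σ α * α⁻¹) (j : ℕ) :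
    (⇑σ)^[j] β = σ ((⇑σ)^[j] α) * ((⇑σ)^[j] α)⁻¹ := by
  rw [hβ, iter_map_mul, iter_map_inv]
  congr 2
  rw [← Function.iterate_succ_apply, Function.iterate_succ_apply']

lemma alpha_ne {n : ℕ} (hn : 0 < n) (α : L)
    (hα : ∀ a : L, ∃! c : Fin n → L,
      (∀ i, σ (c i) = c i) ∧ a = ∑ i : Fin n, c i * (⇑σ)^[(i : ℕ)] α) : α ≠ 0 := by
  intro h0
  obtain ⟨c, _, hun⟩ := hα 0
  have h1 : (fun i : Fin n => if i = ⟨0, hn⟩ then (1 : L) else 0) = c := by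
    apply hun
    constructor
    · intro i
      by_cases h : i = ⟨0, hn⟩ <;> simp [h]
    · rw [Finset.sum_eq_single (⟨0, hn⟩ : Fin n)]
      · rw [if_pos rfl, one_mul]
        simp [h0]
      · intro i _ hne
        rw [if_neg hne, zero_mul]
      · intro h; exact absurd (Finset.mem_univ _) h
  have h2 : (fun _ : Fin n => (0 : L)) = c := by
    apply hun
    exact ⟨fun i => map_zero σ, by simp⟩
  have := congrFun (h1.trans h2.symm) ⟨0, hn⟩
  simp at this

include hrep in
lemma monic_one : SkewMonic (⇑rep.symm) (1 : S) := by
  refine ⟨0, ?_, ?_⟩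
  · rw [symm_one ι x rep hrep]; simp
  · intro k hk
    rw [symm_one ι x rep hrep, Finsupp.single_apply, if_neg (by omega)]

include hx hrep in
lemma lclm_step {F : Set S} {h : S} (hh : IsLCLM (⇑rep.symm) F h) {d : L} (hd : d ≠ 0) :
    ∃ h', IsLCLM (⇑rep.symm) (F ∪ {x - ι (σ d * d⁻¹)}) h' ∧
      Deg rep h' ≤ Deg rep h + 1 := by
  obtain ⟨hmon, hiff⟩ := hh
  have hhne := monic_ne_zero rep hmon
  by_cases hr : hatS σ rep h d = 0
  · refine ⟨h, ⟨hmon, ?_⟩, by omega⟩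
    intro s
    rw [hiff s]
    constructor
    · intro hall f hf
      rcases hf with hf | hf
      · exact hall f hf
      · rw [Set.mem_singleton_iff] at hf
        subst hf
        obtain ⟨q, hq⟩ := (hiff s).2 hall
        obtain ⟨q', hq'⟩ := (hroot σ ι x rep hx hrep hd h).2 hr
        exact ⟨q * q', by rw [hq, hq', mul_assoc]⟩
    · intro hall f hf
      exact hall f (Set.mem_union_left _ hf)
  · set r := hatS σ rep h d with hrdef
    set c := σ r * r⁻¹ with hcdef
    have lf := linear_facts ι x rep hrep c
    have hmul := mul_basic σ ι x rep hx hrep lf.1 hhne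
    have hmon' : SkewMonic (⇑rep.symm) ((x - ι c) * h) := by
      apply monic_of rep hmul.1
      rw [hmul.2.2, lf.2.2.1, one_mul, lf.2.1, monic_lead rep hmon, iter_map_one]
    refine ⟨(x - ι c) * h, ⟨hmon', ?_⟩, by
      rw [hmul.2.1, lf.2.1]; omega⟩
    intro s
    constructor
    · rintro ⟨q, rfl⟩ f hf
      rcases hf with hf | hf
      · exact (hiff _).1 ⟨q * (x - ι c), by rw [mul_assoc]⟩ f hf
      · rw [Set.mem_singleton_iff] at hf
        subst hf
        apply (hroot σ ι x rep hx hrep hd _).2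
        rw [hat_mul σ ι x rep hx hrep, hat_mul σ ι x rep hx hrep,
          hat_linear σ ι x rep hrep, ← hrdef, hcdef, mul_assoc,
          inv_mul_cancel₀ hr, mul_one, sub_self, hat_at_zero]
    · intro hall
      obtain ⟨p, hp⟩ := (hiff s).2 fun f hf => hall f (Set.mem_union_left _ hf)
      have hsd : hatS σ rep s d = 0 := by
        obtain ⟨q, hq⟩ := hall (x - ι (σ d * d⁻¹)) (Set.mem_union_right _ rfl)
        exact (hroot σ ι x rep hx hrep hd s).1 ⟨q, hq⟩
      have hpr : hatS σ rep p r = 0 := by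
        rw [hp, hat_mul σ ι x rep hx hrep, ← hrdef] at hsd
        exact hsd
      obtain ⟨tq, htq⟩ := (hroot σ ι x rep hx hrep hr p).2 hpr
      exact ⟨tq, by rw [hp, htq, mul_assoc]⟩

include hx hrep in
lemma chain_from (n : ℕ) (hn : 0 < n) (β α : L) (hβ : β = σ α * α⁻¹) (hane : α ≠ 0)
    (j0 : ℕ) (hj0n : j0 ≤ n) (g : S)
    (hg : IsLCLM (⇑rep.symm) {s : S | ∃ i, j0 ≤ i ∧ i ≤ n - 1 ∧ s = x - ι ((⇑σ)^[i] β)} g) :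
    ∀ t j, j + t = j0 → 1 ≤ j →
      ∃ B, IsLCLM (⇑rep.symm) {s : S | ∃ i, j ≤ i ∧ i ≤ n - 1 ∧ s = x - ι ((⇑σ)^[i] β)} B ∧
        Deg rep B ≤ Deg rep g + (j0 - j) := by
  intro t
  induction t with
  | zero =>
    intro j hj _
    have : j = j0 := by omega
    subst this
    exact ⟨g, hg, by simp⟩
  | succ t ih =>
    intro j hj hj1
    obtain ⟨B', hB', hd'⟩ := ih (j + 1) (by omega) (by omega)
    have hdne : (⇑σ)^[j] α ≠ 0 := iter_ne_zero σ j hane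
    obtain ⟨B, hB, hdB⟩ := lclm_step σ ι x rep hx hrep hB' hdne
    rw [← beta_conj σ β α hβ j] at hB
    have hset : ({s : S | ∃ i, j + 1 ≤ i ∧ i ≤ n - 1 ∧ s = x - ι ((⇑σ)^[i] β)}
        ∪ {x - ι ((⇑σ)^[j] β)} : Set S)
        = {s : S | ∃ i, j ≤ i ∧ i ≤ n - 1 ∧ s = x - ι ((⇑σ)^[i] β)} := by
      ext s
      constructor
      · rintro (⟨i, h1, h2, rfl⟩ | hsin)
        · exact ⟨i, by omega, h2, rfl⟩
        · rw [Set.mem_singleton_iff] at hsin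
          subst hsin
          exact ⟨j, le_rfl, by omega, rfl⟩
      · rintro ⟨i, h1, h2, rfl⟩
        rcases eq_or_lt_of_le h1 with rfl | hlt
        · exact Set.mem_union_right _ rfl
        · exact Set.mem_union_left _ ⟨i, by omega, h2, rfl⟩
    rw [hset] at hB
    exact ⟨B, hB, by omega⟩

end Skew

set_option maxHeartbeats 1000000

/-- Let `L` be a field with automorphism `σ` of finite order `n`, with
`{α, σ(α), …, σ^{n-1}(α)}` a normal basis of `L` over the fixed field `K = L^σ`
(expressed by unique representability with `σ`-invariant coefficients), and
`β = σ(α)α⁻¹`. If `γ ∈ L` satisfies `(x−γ)·lclm(x−σ(β),…,x−σ^{n-1}(β)) = x^n − 1` in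
`L[x;σ]`, then for all `0 ≤ k ≤ n−1`,
`lcrm(x−γ,…,x−σ^k(γ)) · lclm(x−σ^{k+1}(β),…,x−σ^{n-1}(β)) = x^n − 1`. -/
theorem stmt15 {L S : Type*} [Field L] [Ring S]
    (σ : L ≃+* L) (n : ℕ) (hn : 0 < n) (hσn : ∀ a : L, (⇑σ)^[n] a = a)
    (ι : L →+* S) (x : S) (hx : ∀ a : L, x * ι a = ι (σ a) * x)
    (rep : (ℕ →₀ L) ≃+ S)
    (hrep : ∀ p : ℕ →₀ L, rep p = ∑ k ∈ p.support, ι (p k) * x ^ k)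
    (α : L)
    (hα : ∀ a : L, ∃! c : Fin n → L,
      (∀ i, σ (c i) = c i) ∧ a = ∑ i : Fin n, c i * (⇑σ)^[(i : ℕ)] α)
    (β : L) (hβ : β = σ α * α⁻¹)
    (hfull : IsLCLM (⇑rep.symm) {s | ∃ i < n, s = x - ι ((⇑σ)^[i] β)} (x ^ n - 1))
    (γ : L)
    (hγ : ∀ N : S, IsLCLM (⇑rep.symm)
        {s | ∃ i, 1 ≤ i ∧ i ≤ n - 1 ∧ s = x - ι ((⇑σ)^[i] β)} N →
      (x - ι γ) * N = x ^ n - 1)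
    (k : ℕ) (hk : k ≤ n - 1) :
    ∀ m g : S,
      IsLCRM (⇑rep.symm) {s | ∃ i ≤ k, s = x - ι ((⇑σ)^[i] γ)} m →
      IsLCLM (⇑rep.symm) {s | ∃ i, k + 1 ≤ i ∧ i ≤ n - 1 ∧ s = x - ι ((⇑σ)^[i] β)} g →
      m * g = x ^ n - 1 := by
  intro m g hm hg
  classical
  have hαne : α ≠ 0 := alpha_ne σ hn α hα
  have hβc : ∀ j : ℕ, (⇑σ)^[j] β = σ ((⇑σ)^[j] α) * ((⇑σ)^[j] α)⁻¹ := beta_conj σ β α hβ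
  have hdne : ∀ j : ℕ, (⇑σ)^[j] α ≠ 0 := fun j => iter_ne_zero σ j hαne
  obtain ⟨xne, xdeg, xlead, xmon⟩ := xn_facts ι x rep hrep n hn
  have hcen := central_xn σ ι x rep hx hrep n hσn
  -- Step 1 : Deg g ≤ n - 1 - k
  have honeLCLM : IsLCLM (⇑rep.symm)
      {s : S | ∃ i, n ≤ i ∧ i ≤ n - 1 ∧ s = x - ι ((⇑σ)^[i] β)} (1 : S) := by
    refine ⟨monic_one ι x rep hrep, fun s => ?_⟩
    constructor
    · rintro _ f ⟨i, h1, h2, rfl⟩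
      exact (by omega : False).elim
    · intro _
      exact ⟨s, (mul_one s).symm⟩
  obtain ⟨g', hg', hdg'⟩ := chain_from σ ι x rep hx hrep n hn β α hβ hαne n le_rfl 1
    honeLCLM (n - (k + 1)) (k + 1) (by omega) (by omega)
  have hgg' : g = g' := by
    apply monic_unique σ ι x rep hx hrep hg.1 hg'.1
    · exact (hg'.2 g).2 ((hg.2 g).1 ⟨1, (one_mul g).symm⟩)
    · exact (hg.2 g').2 ((hg'.2 g').1 ⟨1, (one_mul g').symm⟩)
  have hD1 := Deg_one ι x rep hrep
  have hdg_le : Deg rep g ≤ n - (k + 1) := by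
    rw [hgg']; omega
  -- Step 2 : B1 from g
  obtain ⟨B1, hB1, hdB1⟩ := chain_from σ ι x rep hx hrep n hn β α hβ hαne (k + 1)
    (by omega) g hg k 1 (by omega) le_rfl
  have hγB1 : (x - ι γ) * B1 = x ^ n - 1 := hγ B1 hB1
  have hB1ne := monic_ne_zero rep hB1.1
  have lfγ0 := linear_facts ι x rep hrep γ
  have hdB1' : Deg rep B1 = n - 1 := by
    have h1 := Deg_mul σ ι x rep hx hrep lfγ0.1 hB1ne
    rw [hγB1, xdeg, lfγ0.2.1] at h1
    omega
  have hdg : Deg rep g = n - 1 - k := by omega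
  -- Step 3 : roots of B1, the element ct
  have hB1root : ∀ i, 1 ≤ i → i ≤ n - 1 → ∃ q, B1 = q * (x - ι ((⇑σ)^[i] β)) :=
    fun i h1 h2 => (hB1.2 B1).1 ⟨1, (one_mul B1).symm⟩ _ ⟨i, h1, h2, rfl⟩
  have hB1hat0 : ∀ i, 1 ≤ i → i ≤ n - 1 → hatS σ rep B1 ((⇑σ)^[i] α) = 0 := by
    intro i h1 h2
    apply (hroot σ ι x rep hx hrep (hdne i) B1).1
    rw [← hβc i]
    exact hB1root i h1 h2
  set ct := hatS σ rep B1 α with hct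
  have hctne : ct ≠ 0 := by
    intro h0
    have hall : ∀ v, hatS σ rep B1 v = 0 := by
      intro v
      obtain ⟨c, ⟨hcinv, hcsum⟩, _⟩ := hα v
      rw [hcsum, hat_v_sum]
      apply Finset.sum_eq_zero
      intro i _
      rw [hat_smul σ rep B1 (hcinv i)]
      rcases Nat.eq_zero_or_pos (i : ℕ) with hi0 | hip
      · rw [hi0]
        show c i * hatS σ rep B1 α = 0
        rw [← hct, h0, mul_zero]
      · rw [hB1hat0 (i : ℕ) hip (by omega), mul_zero]
    have hdivall : ∀ f ∈ {s : S | ∃ i < n, s = x - ι ((⇑σ)^[i] β)}, ∃ q, B1 = q * f := by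
      rintro f ⟨i, hin, rfl⟩
      obtain ⟨q, hq⟩ := (hroot σ ι x rep hx hrep (hdne i) B1).2 (hall _)
      exact ⟨q, by rw [hq, ← hβc i]⟩
    obtain ⟨q, hq⟩ := (hfull.2 B1).2 hdivall
    have hqne : q ≠ 0 := by rintro rfl; rw [zero_mul] at hq; exact hB1ne hq
    have h2 := Deg_mul σ ι x rep hx hrep hqne xne
    rw [← hq, hdB1', xdeg] at h2
    omega
  have hσict : ∀ i : ℕ, (⇑σ)^[i] ct ≠ 0 := fun i => iter_ne_zero σ i hctne
  -- Step 4 : twisted factors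
  have heq1 : ∀ i : ℕ, (x - ι ((⇑σ)^[i] γ)) * (Etw σ rep)^[i] B1 = x ^ n - 1 := by
    intro i
    have h1 := congrArg ((Etw σ rep)^[i]) hγB1
    rwa [Eiter_mul σ ι x rep hx hrep, Eiter_linear σ ι x rep hrep,
      Eiter_xn_sub_one σ ι x rep hrep n] at h1
  have hGine : ∀ i : ℕ, (Etw σ rep)^[i] B1 ≠ 0 := by
    intro i h0
    have h1 := heq1 i
    rw [h0, mul_zero] at h1
    exact xne h1.symm
  have hGiw : ∀ i : ℕ, i ≤ k → ∃ w, (Etw σ rep)^[i] B1 = w * g := by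
    intro i hik
    apply (hg.2 _).2
    rintro f ⟨j, hj1, hj2, rfl⟩
    obtain ⟨q, hq⟩ := hB1root (j - i) (by omega) (by omega)
    refine ⟨(Etw σ rep)^[i] q, ?_⟩
    have h1 := congrArg ((Etw σ rep)^[i]) hq
    rw [Eiter_mul σ ι x rep hx hrep, Eiter_linear σ ι x rep hrep] at h1
    rw [h1]
    have h2 : (⇑σ)^[i] ((⇑σ)^[j - i] β) = (⇑σ)^[j] β := by
      rw [← Function.iterate_add_apply]
      congr 1
      omega
    rw [h2]
  have hflip : ∀ i : ℕ, x ^ n - 1 = (Etw σ rep)^[i] B1 * (x - ι ((⇑σ)^[i] γ)) :=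
    fun i => central_flip σ ι x rep hx hrep hcen (heq1 i).symm (hGine i)
  have hΦkill : ∀ i : ℕ, ∀ z : L,
      hatS σ rep ((Etw σ rep)^[i] B1) (σ z - (⇑σ)^[i] γ * z) = 0 := by
    intro i z
    have h0 := hat_xn_sub_one σ ι x rep hrep n hσn z
    rw [hflip i, hat_mul σ ι x rep hx hrep, hat_linear σ ι x rep hrep] at h0
    exact h0
  have hΦej : ∀ i j : ℕ, i ≤ k → j ≤ n - 1 → i ≠ j →
      hatS σ rep ((Etw σ rep)^[i] B1) ((⇑σ)^[j] α) = 0 := by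
    intro i j hik hj hne
    rw [hat_Eiter]
    rcases Nat.lt_or_ge i j with hij | hij
    · have h2 : (⇑σ)^[j] α = (⇑σ)^[i] ((⇑σ)^[j - i] α) := by
        rw [← Function.iterate_add_apply]
        congr 1
        omega
      rw [h2, symm_iter_apply, hB1hat0 (j - i) (by omega) (by omega), iter_map_zero]
    · have e1 : (⇑σ.symm)^[i] ((⇑σ)^[j] α)
          = (⇑σ.symm)^[i - j] ((⇑σ.symm)^[j] ((⇑σ)^[j] α)) := by
        rw [← Function.iterate_add_apply]
        congr 1
        omega
      rw [e1, symm_iter_apply, symm_iter_eq σ hσn (i - j) (by omega),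
        hB1hat0 (n - (i - j)) (by omega) (by omega), iter_map_zero]
  have hΦei : ∀ i : ℕ,
      hatS σ rep ((Etw σ rep)^[i] B1) ((⇑σ)^[i] α) = (⇑σ)^[i] ct := by
    intro i
    rw [hat_Eiter, symm_iter_apply, hct]
  -- Step 5 : u
  obtain ⟨u, hu⟩ : ∃ u, x ^ n - 1 = u * g := by
    apply (hg.2 _).2
    rintro f ⟨j, hj1, hj2, rfl⟩
    exact (hfull.2 _).1 ⟨1, (one_mul _).symm⟩ _ ⟨j, by omega, rfl⟩
  have hune : u ≠ 0 := by rintro rfl; rw [zero_mul] at hu; exact xne hu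
  have hgne := monic_ne_zero rep hg.1
  have hudiv : ∀ i : ℕ, i ≤ k → ∃ w, u = (x - ι ((⇑σ)^[i] γ)) * w := by
    intro i hik
    obtain ⟨w, hw⟩ := hGiw i hik
    refine ⟨w, ?_⟩
    apply cancel_right σ ι x rep hx hrep hgne
    rw [← hu, ← heq1 i, hw, mul_assoc]
  -- Step 6 : m facts
  have hmdivL : ∀ i : ℕ, i ≤ k → ∃ q, m = (x - ι ((⇑σ)^[i] γ)) * q := by
    intro i hik
    exact (hm.2 m).1 ⟨1, (mul_one m).symm⟩ _ ⟨i, hik, rfl⟩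
  obtain ⟨v, hv⟩ : ∃ v, u = m * v := by
    apply (hm.2 u).2
    rintro f ⟨i, hik, rfl⟩
    exact hudiv i hik
  have hmne := monic_ne_zero rep hm.1
  have hvne : v ≠ 0 := by rintro rfl; rw [mul_zero] at hv; exact hune hv
  -- Step 7 : Deg m ≥ k + 1
  have hdm : k + 1 ≤ Deg rep m := by
    by_cases hhat0 : ∀ w, hatS σ rep m w = 0
    · have hdivall : ∀ f ∈ {s : S | ∃ i < n, s = x - ι ((⇑σ)^[i] β)}, ∃ q, m = q * f := by
        rintro f ⟨i, hin, rfl⟩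
        obtain ⟨q, hq⟩ := (hroot σ ι x rep hx hrep (hdne i) m).2 (hhat0 _)
        exact ⟨q, by rw [hq, ← hβc i]⟩
      obtain ⟨q, hq⟩ := (hfull.2 m).2 hdivall
      have hqne : q ≠ 0 := by rintro rfl; rw [zero_mul] at hq; exact hmne hq
      have h2 := Deg_mul σ ι x rep hx hrep hqne xne
      rw [← hq, xdeg] at h2
      omega
    · push_neg at hhat0
      set F : L →ₗ[fixedK σ] L :=
        { toFun := hatS σ rep m,
          map_add' := hat_v_add σ rep m,
          map_smul' := by
            intro c z
            simp only [RingHom.id_apply]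
            rw [fixedK_smul, fixedK_smul, hat_smul σ rep m c.2] } with hF
      have hrange : ∀ z : L, F z ∈ Submodule.span (fixedK σ)
          (Set.range (fun j : Fin (n - 1 - k) => (⇑σ)^[k + 1 + (j : ℕ)] α)) := by
        intro z
        obtain ⟨c, ⟨hcinv, hcsum⟩, _⟩ := hα (hatS σ rep m z)
        have hcoef : ∀ i : Fin n, (i : ℕ) ≤ k → c i = 0 := by
          intro i hik
          have h1 : hatS σ rep ((Etw σ rep)^[(i : ℕ)] B1) (hatS σ rep m z)
              = c i * (⇑σ)^[(i : ℕ)] ct := by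
            rw [hcsum, hat_v_sum, Finset.sum_eq_single i]
            · rw [hat_smul σ rep _ (hcinv i), hΦei]
            · intro j _ hji
              rw [hat_smul σ rep _ (hcinv j),
                hΦej (i : ℕ) (j : ℕ) hik (by omega)
                  (fun h => hji (Fin.val_injective h).symm), mul_zero]
            · intro h
              exact absurd (Finset.mem_univ _) h
          have h2 : hatS σ rep ((Etw σ rep)^[(i : ℕ)] B1) (hatS σ rep m z) = 0 := by
            obtain ⟨q, hq⟩ := hmdivL (i : ℕ) hik
            rw [hq, hat_mul σ ι x rep hx hrep, hat_linear σ ι x rep hrep]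
            exact hΦkill (i : ℕ) _
          rw [h2] at h1
          rcases mul_eq_zero.1 h1.symm with h | h
          · exact h
          · exact absurd h (hσict _)
        show hatS σ rep m z ∈ _
        rw [hcsum]
        apply Submodule.sum_mem
        intro i _
        rcases Nat.lt_or_ge (i : ℕ) (k + 1) with hik | hik
        · rw [hcoef i (by omega), zero_mul]
          exact Submodule.zero_mem _
        · have hsm : c i * (⇑σ)^[(i : ℕ)] α
              = (⟨c i, hcinv i⟩ : fixedK σ) • (⇑σ)^[(i : ℕ)] α := rfl
          rw [hsm]
          apply Submodule.smul_mem
          apply Submodule.subset_span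
          refine ⟨⟨(i : ℕ) - (k + 1), by omega⟩, ?_⟩
          show (⇑σ)^[k + 1 + ((i : ℕ) - (k + 1))] α = (⇑σ)^[(i : ℕ)] α
          congr 1
          omega
      obtain ⟨vfam, hvind, hvker⟩ := exists_ker_indep σ n k hn hk α hα F hrange
      by_contra hcon
      push_neg at hcon
      refine ker_bound σ k (hatS σ rep m) ⟨fun j => (rep.symm m) j, fun z => ?_⟩
        hhat0 vfam hvker hvind
      exact hat_eq_sum σ rep (by
        intro j hj
        rw [Finset.mem_range]
        have := le_Degp hj
        have h3 : Degp (rep.symm m) = Deg rep m := rfl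
        omega) z
  -- Step 8 : conclude
  have hDu : Deg rep u + Deg rep g = n := by
    have h1 := Deg_mul σ ι x rep hx hrep hune hgne
    rw [← hu, xdeg] at h1
    omega
  have hDmv : Deg rep m + Deg rep v = Deg rep u := by
    have h1 := Deg_mul σ ι x rep hx hrep hmne hvne
    rw [← hv] at h1
    omega
  have hdv : Deg rep v = 0 := by omega
  have hlu : lead rep u = 1 := by
    have h1 := lead_mul σ ι x rep hx hrep hune hgne
    rw [← hu, xlead, monic_lead rep hg.1, iter_map_one, mul_one] at h1
    exact h1.symm
  have hlv : lead rep v = 1 := by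
    have h1 := lead_mul σ ι x rep hx hrep hmne hvne
    rw [← hv, hlu, monic_lead rep hm.1, one_mul] at h1
    have h2 := congrArg ((⇑σ.symm)^[Deg rep m]) h1
    rw [symm_iter_apply, iter_map_one σ.symm] at h2
    exact h2.symm
  have hv1 : v = 1 := by
    rw [deg_zero_eq ι x rep hrep hvne hdv, hlv, map_one]
  have hum : u = m := by rw [hv, hv1, mul_one]
  rw [← hum]
  exact hu.symm
end

section
/- Let L be a field with automorphism σ of finite order n, ℛ = L[x;σ]/⟨x^n−1⟩, Θ the involution Θ(Σ a_i x^i) = Σ σ^{−i}(a_i)x^{−i}. If h = lcrm{x − σ^i(γ) : 0 ≤ i ≤ k−1} in ℛ and γ' = σ(γ)^{-1}, then ℛ·Θ(h) = ℛ·lclm{x − σ^i(γ') : 0 ≤ i ≤ k−1}. -/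
/-- Let `L` be a field with automorphism `σ` of finite order `n`,
`ℛ = L[x;σ]/⟨x^n − 1⟩` (presented abstractly: free left `L`-module on `1,…,x^{n-1}`
with `x·a = σ(a)·x` and `x^n = 1`), and `Θ` the involution
`Θ(Σ a_i x^i) = Σ σ^{-i}(a_i)x^{-i}` (with `x^{-1} = x^{n-1}`). If
`h = lcrm{x − σ^i(γ) : 0 ≤ i ≤ k−1}` in `ℛ` (in the sense that `hℛ` is the
intersection of the right ideals `(x − σ^i(γ))ℛ`) and `γ' = σ(γ)⁻¹`, then
`ℛ·Θ(h) = ℛ·lclm{x − σ^i(γ') : 0 ≤ i ≤ k−1}` (same sense, on the left). -/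
theorem stmt16 {L R : Type*} [Field L] [Ring R]
    (σ : L ≃+* L) (n : ℕ) (hn : 0 < n) (hσn : ∀ a : L, (⇑σ)^[n] a = a)
    (ι : L →+* R) (x : R) (hx : ∀ a : L, x * ι a = ι (σ a) * x) (hxn : x ^ n = 1)
    (rep : (Fin n → L) ≃+ R)
    (hrep : ∀ c : Fin n → L, rep c = ∑ i : Fin n, ι (c i) * x ^ (i : ℕ))
    (Θ : R → R)
    (hΘ : ∀ r : R, Θ r = ∑ i : Fin n,
      ι ((⇑σ.symm)^[(i : ℕ)] (rep.symm r i)) * (x ^ (n - 1)) ^ (i : ℕ))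
    (γ : L) (hγ0 : γ ≠ 0) (k : ℕ) (h h' : R)
    (hh : ∀ s : R, (∃ q, s = h * q) ↔ ∀ i < k, ∃ q, s = (x - ι ((⇑σ)^[i] γ)) * q)
    (hh' : ∀ s : R, (∃ q, s = q * h') ↔ ∀ i < k, ∃ q, s = q * (x - ι ((⇑σ)^[i] (σ γ)⁻¹))) :
    ∀ s : R, (∃ q, s = q * Θ h) ↔ (∃ q, s = q * h') := by
  obtain ⟨m, rfl⟩ : ∃ m, n = m + 1 := ⟨n - 1, (Nat.succ_pred_eq_of_pos hn).symm⟩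
  simp only [Nat.add_sub_cancel] at hΘ
  -- basic sigma facts
  have hσs : ∀ a : L, (⇑σ.symm)^[m+1] a = a := fun a => by
    conv_lhs => rw [← hσn a]
    exact (Function.LeftInverse.iterate σ.symm_apply_apply (m+1)) a
  have hσmulq : ∀ (q : ℕ) (a : L), (⇑σ.symm)^[(m+1)*q] a = a := by
    intro q
    induction q with
    | zero => simp
    | succ q ih =>
      intro a
      have : (m+1)*(q+1) = (m+1)*q + (m+1) := by ring
      rw [this, Function.iterate_add_apply, hσs]
      exact ih a
  have hσpowq : ∀ (q : ℕ) (a : L), (⇑σ)^[(m+1)*q] a = a := by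
    intro q
    induction q with
    | zero => simp
    | succ q ih =>
      intro a
      have : (m+1)*(q+1) = (m+1)*q + (m+1) := by ring
      rw [this, Function.iterate_add_apply, hσn]
      exact ih a
  have hσmod : ∀ (j : ℕ) (a : L), (⇑σ.symm)^[j] a = (⇑σ.symm)^[j % (m+1)] a := by
    intro j a
    conv_lhs => rw [← Nat.div_add_mod j (m+1)]
    rw [Function.iterate_add_apply, hσmulq]
  have hσinv : ∀ (j : ℕ) (a : L), (⇑σ)^[m*j] a = (⇑σ.symm)^[j] a := by
    intro j a
    have h1 : (⇑σ)^[j] ((⇑σ.symm)^[j] a) = a :=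
      (Function.LeftInverse.iterate σ.apply_symm_apply j) a
    calc (⇑σ)^[m*j] a = (⇑σ)^[m*j] ((⇑σ)^[j] ((⇑σ.symm)^[j] a)) := by rw [h1]
      _ = (⇑σ)^[m*j + j] ((⇑σ.symm)^[j] a) := (Function.iterate_add_apply _ _ _ _).symm
      _ = (⇑σ)^[(m+1)*j] ((⇑σ.symm)^[j] a) := by rw [Nat.succ_mul]
      _ = (⇑σ.symm)^[j] a := hσpowq j _
  have hs0 : ∀ (i : ℕ), (⇑σ.symm)^[i] (0 : L) = 0 := fun i =>
    Function.iterate_fixed (map_zero σ.symm) i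
  -- x facts
  have hxq : ∀ q : ℕ, x ^ ((m+1)*q) = 1 := fun q => by rw [pow_mul, hxn, one_pow]
  have hxmod : ∀ j : ℕ, x ^ j = x ^ (j % (m+1)) := by
    intro j
    conv_lhs => rw [← Nat.div_add_mod j (m+1)]
    rw [pow_add, hxq, one_mul]
  have hxa : ∀ (j : ℕ) (a : L), x ^ j * ι a = ι ((⇑σ)^[j] a) * x ^ j := by
    intro j
    induction j with
    | zero => intro a; simp
    | succ j ih =>
      intro a
      rw [pow_succ', mul_assoc, ih, ← mul_assoc, hx, Function.iterate_succ_apply',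
        mul_assoc]
  -- monomial computation of Θ
  have hmono_lt : ∀ (j : ℕ) (hj : j < m+1) (a : L),
      Θ (ι a * x ^ j) = ι ((⇑σ.symm)^[j] a) * x ^ (m * j) := by
    intro j hj a
    set jf : Fin (m+1) := ⟨j, hj⟩ with hjf
    have hc : rep.symm (ι a * x ^ j) = Pi.single jf a := by
      rw [AddEquiv.symm_apply_eq, hrep]
      rw [Finset.sum_eq_single jf
        (fun b _ hbj => by rw [Pi.single_eq_of_ne hbj, map_zero, zero_mul])
        (fun hjm => absurd (Finset.mem_univ jf) hjm), Pi.single_eq_same]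
    rw [hΘ]
    rw [Finset.sum_eq_single jf
      (fun b _ hbj => by rw [hc, Pi.single_eq_of_ne hbj, hs0, map_zero, zero_mul])
      (fun hjm => absurd (Finset.mem_univ jf) hjm), hc, Pi.single_eq_same, ← pow_mul]
  have hmono : ∀ (j : ℕ) (a : L),
      Θ (ι a * x ^ j) = ι ((⇑σ.symm)^[j] a) * x ^ (m * j) := by
    intro j a
    have hjlt : j % (m+1) < m+1 := Nat.mod_lt _ (Nat.succ_pos m)
    have hexp : m * (j % (m+1)) % (m+1) = m * j % (m+1) := by
      conv_rhs => rw [Nat.mul_mod]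
      conv_lhs => rw [Nat.mul_mod, Nat.mod_mod_of_dvd _ dvd_rfl]
    calc Θ (ι a * x ^ j) = Θ (ι a * x ^ (j % (m+1))) := by rw [hxmod j]
      _ = ι ((⇑σ.symm)^[j % (m+1)] a) * x ^ (m * (j % (m+1))) := hmono_lt _ hjlt a
      _ = ι ((⇑σ.symm)^[j] a) * x ^ (m * j) := by
          rw [← hσmod, hxmod (m * (j % (m+1))), hexp, ← hxmod]
  -- additivity of Θ
  have hΘ0 : Θ 0 = 0 := by
    rw [hΘ]
    refine Finset.sum_eq_zero fun i _ => ?_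
    rw [map_zero]
    simp [hs0]
  have hΘadd : ∀ r s : R, Θ (r + s) = Θ r + Θ s := by
    intro r s
    rw [hΘ (r + s), hΘ r, hΘ s, ← Finset.sum_add_distrib]
    refine Finset.sum_congr rfl fun i _ => ?_
    rw [map_add, Pi.add_apply, iterate_map_add, map_add, add_mul]
  let Θ' : R →+ R := { toFun := Θ, map_zero' := hΘ0, map_add' := hΘadd }
  have hΘsum : ∀ f : Fin (m+1) → R, Θ (∑ i : Fin (m+1), f i) = ∑ i : Fin (m+1), Θ (f i) :=
    fun f => map_sum Θ' f Finset.univ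
  have hΘsub : ∀ r s : R, Θ (r - s) = Θ r - Θ s := fun r s => map_sub Θ' r s
  have hdecomp : ∀ r : R, r = ∑ i : Fin (m+1), ι (rep.symm r i) * x ^ (i : ℕ) := by
    intro r
    conv_lhs => rw [← rep.apply_symm_apply r]
    rw [hrep]
  have hΘx : Θ x = x ^ m := by
    have := hmono 1 1
    simpa using this
  have hΘc : ∀ a : L, Θ (ι a) = ι a := fun a => by simpa using hmono 0 a
  have hΘxa : ∀ a : L, Θ (x - ι a) = x ^ m - ι a := fun a => by
    rw [hΘsub, hΘx, hΘc]
  -- anti-multiplicativity on monomials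
  have hmul2 : ∀ (i j : ℕ) (a b : L),
      Θ ((ι a * x ^ i) * (ι b * x ^ j)) = Θ (ι b * x ^ j) * Θ (ι a * x ^ i) := by
    intro i j a b
    have hprod : ι a * x ^ i * (ι b * x ^ j) = ι (a * (⇑σ)^[i] b) * x ^ (i + j) := by
      rw [map_mul, pow_add]
      calc ι a * x ^ i * (ι b * x ^ j) = ι a * (x ^ i * ι b) * x ^ j := by
            rw [mul_assoc (ι a), ← mul_assoc (x ^ i), mul_assoc (ι a)]
        _ = ι a * (ι ((⇑σ)^[i] b) * x ^ i) * x ^ j := by rw [hxa]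
        _ = ι a * ι ((⇑σ)^[i] b) * (x ^ i * x ^ j) := by
            rw [← mul_assoc, mul_assoc (ι a * ι ((⇑σ)^[i] b))]
    have h3 : (⇑σ.symm)^[i + j] ((⇑σ)^[i] b) = (⇑σ.symm)^[j] b := by
      rw [Nat.add_comm, Function.iterate_add_apply]
      congr 1
      exact (Function.LeftInverse.iterate σ.symm_apply_apply i) b
    have h4 : (⇑σ.symm)^[j] ((⇑σ.symm)^[i] a) = (⇑σ.symm)^[i + j] a := by
      rw [Nat.add_comm, Function.iterate_add_apply]
    rw [hprod, hmono, hmono, hmono]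
    calc ι ((⇑σ.symm)^[i + j] (a * (⇑σ)^[i] b)) * x ^ (m * (i + j))
        = ι ((⇑σ.symm)^[j] b * (⇑σ.symm)^[i + j] a) * (x ^ (m * j) * x ^ (m * i)) := by
          rw [iterate_map_mul, h3, mul_comm ((⇑σ.symm)^[i+j] a), ← pow_add, ← Nat.mul_add,
            Nat.add_comm j i]
      _ = ι ((⇑σ.symm)^[j] b) * (ι ((⇑σ.symm)^[i+j] a) * x ^ (m * j)) * x ^ (m * i) := by
          rw [map_mul, mul_assoc, mul_assoc, mul_assoc]
      _ = ι ((⇑σ.symm)^[j] b) * (x ^ (m * j) * ι ((⇑σ.symm)^[i] a)) * x ^ (m * i) := by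
          rw [hxa, hσinv, h4]
      _ = ι ((⇑σ.symm)^[j] b) * x ^ (m * j) * (ι ((⇑σ.symm)^[i] a) * x ^ (m * i)) := by
          rw [mul_assoc, mul_assoc, mul_assoc]
  have hΘmul : ∀ r s : R, Θ (r * s) = Θ s * Θ r := by
    intro r s
    have LHS1 : Θ (r * s) = ∑ i : Fin (m+1), ∑ j : Fin (m+1),
        Θ ((ι (rep.symm r i) * x ^ (i:ℕ)) * (ι (rep.symm s j) * x ^ (j:ℕ))) := by
      conv_lhs => rw [hdecomp r, hdecomp s, Finset.sum_mul_sum]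
      rw [hΘsum]
      exact Finset.sum_congr rfl fun i _ => hΘsum _
    have RHS1 : Θ s * Θ r = ∑ j : Fin (m+1), ∑ i : Fin (m+1),
        Θ (ι (rep.symm s j) * x ^ (j:ℕ)) * Θ (ι (rep.symm r i) * x ^ (i:ℕ)) := by
      conv_lhs => rw [hdecomp r, hdecomp s]
      rw [hΘsum, hΘsum, Finset.sum_mul_sum]
    rw [LHS1, RHS1, Finset.sum_comm]
    exact Finset.sum_congr rfl fun j _ => Finset.sum_congr rfl fun i _ => hmul2 _ _ _ _
  -- involution on monomials
  have hmono2 : ∀ (i : ℕ) (a : L), Θ (Θ (ι a * x ^ i)) = ι a * x ^ i := by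
    intro i a
    have e1 : x ^ (m * (m * i)) * x ^ (m * i) = 1 := by
      rw [← pow_add]
      have : m * (m * i) + m * i = (m+1) * (m * i) := by ring
      rw [this, hxq]
    have e2 : x ^ (m * i) * x ^ i = 1 := by
      rw [← pow_add]
      have : m * i + i = (m+1) * i := by ring
      rw [this, hxq]
    have e3 : x ^ (m * (m * i)) = x ^ i := by
      calc x ^ (m * (m * i)) = x ^ (m * (m * i)) * (x ^ (m * i) * x ^ i) := by
            rw [e2, mul_one]
        _ = (x ^ (m * (m * i)) * x ^ (m * i)) * x ^ i := by rw [mul_assoc]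
        _ = x ^ i := by rw [e1, one_mul]
    have e4 : (⇑σ.symm)^[m * i] ((⇑σ.symm)^[i] a) = a := by
      rw [← Function.iterate_add_apply]
      have : m * i + i = (m+1) * i := by ring
      rw [this, hσmulq]
    rw [hmono, hmono, e3, e4]
  have hΘinv : ∀ r : R, Θ (Θ r) = r := by
    intro r
    have step : Θ (Θ r) = ∑ i : Fin (m+1), Θ (Θ (ι (rep.symm r i) * x ^ (i:ℕ))) := by
      conv_lhs => rw [hdecomp r]
      rw [hΘsum, hΘsum]
    rw [step]
    conv_rhs => rw [hdecomp r]
    exact Finset.sum_congr rfl fun i _ => hmono2 _ _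
  -- factorization facts
  have hfac : ∀ a : L, a ≠ 0 → (-(x ^ m * ι (σ a))) * (x - ι ((σ a)⁻¹)) = x ^ m - ι a := by
    intro a ha
    have hb : σ a ≠ 0 := fun h0 => ha (by
      have := congrArg σ.symm h0
      rwa [σ.symm_apply_apply, map_zero] at this)
    have t1 : x ^ m * ι (σ a) * x = ι a := by
      rw [mul_assoc, ← hx, ← mul_assoc, ← pow_succ, hxn, one_mul]
    have t2 : x ^ m * ι (σ a) * ι ((σ a)⁻¹) = x ^ m := by
      rw [mul_assoc, ← map_mul, mul_inv_cancel₀ hb, map_one, mul_one]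
    rw [mul_sub, neg_mul, neg_mul, t1, t2, neg_sub_neg]
  have hvu : ∀ a : L, a ≠ 0 → (-(ι ((σ a)⁻¹) * x)) * (-(x ^ m * ι (σ a))) = 1 := by
    intro a ha
    have hb : σ a ≠ 0 := fun h0 => ha (by
      have := congrArg σ.symm h0
      rwa [σ.symm_apply_apply, map_zero] at this)
    rw [neg_mul_neg, mul_assoc, ← mul_assoc x, ← pow_succ', hxn, one_mul, ← map_mul,
      inv_mul_cancel₀ hb, map_one]
  -- gamma facts
  have hai : ∀ i : ℕ, (⇑σ)^[i] γ ≠ 0 := by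
    intro i h0
    apply hγ0
    have : (⇑σ)^[i] γ = (⇑σ)^[i] 0 := by rw [h0, Function.iterate_fixed (map_zero σ)]
    exact (σ.injective.iterate i) this
  have hσiterinv : ∀ (j : ℕ) (b : L), (⇑σ)^[j] b⁻¹ = ((⇑σ)^[j] b)⁻¹ := by
    intro j
    induction j with
    | zero => intro b; simp
    | succ j ih =>
      intro b
      rw [Function.iterate_succ_apply', ih, Function.iterate_succ_apply', map_inv₀]
  have hgam : ∀ i : ℕ, (σ ((⇑σ)^[i] γ))⁻¹ = (⇑σ)^[i] ((σ γ)⁻¹) := by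
    intro i
    rw [hσiterinv]
    congr 1
    rw [← Function.iterate_succ_apply' σ i γ, Function.iterate_succ_apply σ i γ]
  -- main argument
  intro s
  constructor
  · rintro ⟨q, rfl⟩
    apply (hh' _).mpr
    intro i hik
    obtain ⟨qi, hqi⟩ := (hh h).mp ⟨1, (mul_one h).symm⟩ i hik
    refine ⟨q * (Θ qi * (-(x ^ m * ι (σ ((⇑σ)^[i] γ))))), ?_⟩
    rw [hqi, hΘmul, hΘxa, ← hfac _ (hai i), hgam i]
    simp only [mul_assoc]
  · rintro ⟨q, rfl⟩
    have hs := (hh' (q * h')).mp ⟨q, rfl⟩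
    obtain ⟨p, hp⟩ : ∃ p, Θ (q * h') = h * p := by
      apply (hh _).mpr
      intro i hik
      obtain ⟨qi, hqi⟩ := hs i hik
      have h1 : x - ι ((⇑σ)^[i] (σ γ)⁻¹) =
          (-(ι ((σ ((⇑σ)^[i] γ))⁻¹) * x)) * Θ (x - ι ((⇑σ)^[i] γ)) := by
        rw [hΘxa, ← hfac _ (hai i), ← mul_assoc, hvu _ (hai i), one_mul, hgam i]
      refine ⟨Θ (qi * (-(ι ((σ ((⇑σ)^[i] γ))⁻¹) * x))), ?_⟩
      rw [hqi, h1, ← mul_assoc, hΘmul, hΘinv]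
    refine ⟨Θ p, ?_⟩
    have h2 := congrArg Θ hp
    rw [hΘinv, hΘmul] at h2
    exact h2
end

section
/- Let L be a field with automorphism σ, and for a ∈ L and i ≥ 0 define the i-th norm N_i(a) = a·σ(a)···σ^{i−1}(a). Then for any f = Σ_i f_i x^i ∈ L[x;σ], the remainder of right division of f by x − a equals Σ_i f_i N_i(a). -/
/-- Let `L` be a field with automorphism `σ`, and for `a ∈ L` let
`N_i(a) = a·σ(a)⋯σ^{i-1}(a)`. In the skew polynomial ring `L[x;σ]` (relation
`x·a = σ(a)·x`, presented abstractly), for any `f = Σ_i f_i x^i`, the remainder of the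
right division of `f` by `x − a` exists, is unique, and equals `Σ_i f_i N_i(a)`. -/
theorem stmt18 {L S : Type*} [Field L] [Ring S]
    (σ : L ≃+* L)
    (ι : L →+* S) (x : S) (hx : ∀ a : L, x * ι a = ι (σ a) * x)
    (rep : (ℕ →₀ L) ≃+ S)
    (hrep : ∀ p : ℕ →₀ L, rep p = ∑ k ∈ p.support, ι (p k) * x ^ k)
    (f : S) (a : L) :
    (∃ q : S, f = q * (x - ι a)
        + ι (∑ k ∈ (rep.symm f).support,
            (rep.symm f) k * ∏ j ∈ Finset.range k, (⇑σ)^[j] a)) ∧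
    ∀ (q : S) (r : L), f = q * (x - ι a) + ι r →
      r = ∑ k ∈ (rep.symm f).support,
        (rep.symm f) k * ∏ j ∈ Finset.range k, (⇑σ)^[j] a := by
  classical
  set N : ℕ → L := fun k => ∏ j ∈ Finset.range k, (⇑σ)^[j] a with hN
  -- represent ι c via rep
  have hsingle : ∀ c : L, ι c = rep (Finsupp.single 0 c) := by
    intro c
    by_cases hc : c = 0
    · simp [hc, hrep]
    · rw [hrep, Finsupp.support_single_ne_zero _ hc]
      simp
  have hι : Function.Injective ι := by
    intro b c h
    rw [hsingle, hsingle] at h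
    have := rep.injective h
    simpa using congrArg (fun g => g 0) this
  -- rep over a superset of the support
  have hrep' : ∀ (g : ℕ →₀ L) (T : Finset ℕ), g.support ⊆ T →
      rep g = ∑ k ∈ T, ι (g k) * x ^ k := by
    intro g T hT
    rw [hrep]
    exact Finset.sum_subset hT (fun k _ hk => by
      simp [Finsupp.notMem_support_iff.mp hk])
  -- commutation of powers of x
  have hxk : ∀ (k : ℕ) (b : L), x ^ k * ι b = ι ((⇑σ)^[k] b) * x ^ k := by
    intro k
    induction k with
    | zero => intro b; simp
    | succ k ih =>
      intro b
      rw [pow_succ', mul_assoc, ih b, ← mul_assoc, hx, Function.iterate_succ_apply',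
        mul_assoc]
  -- key: existence of remainder for powers
  have hpow : ∀ k : ℕ, ∃ q : S, x ^ k = q * (x - ι a) + ι (N k) := by
    intro k
    induction k with
    | zero => exact ⟨0, by simp [hN]⟩
    | succ k ih =>
      obtain ⟨q, hq⟩ := ih
      refine ⟨x * q + ι (σ (N k)), ?_⟩
      have hNsucc : N (k + 1) = σ (N k) * a := by
        show (∏ j ∈ Finset.range (k+1), (⇑σ)^[j] a) = σ (∏ j ∈ Finset.range k, (⇑σ)^[j] a) * a
        rw [Finset.prod_range_succ']
        simp only [Function.iterate_zero_apply]
        congr 1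
        rw [map_prod]
        exact Finset.prod_congr rfl fun j _ => Function.iterate_succ_apply' _ _ _
      rw [pow_succ', hq, mul_add, ← mul_assoc, hx, hNsucc, map_mul]
      noncomm_ring
  -- existence for f
  have hex : ∃ q : S, f = q * (x - ι a)
      + ι (∑ k ∈ (rep.symm f).support, (rep.symm f) k * N k) := by
    set p := rep.symm f with hp
    have hf : f = ∑ k ∈ p.support, ι (p k) * x ^ k := by
      conv_lhs => rw [← rep.apply_symm_apply f, ← hp, hrep]
    choose q hq using hpow
    refine ⟨∑ k ∈ p.support, ι (p k) * q k, ?_⟩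
    rw [hf, Finset.sum_mul, map_sum, ← Finset.sum_add_distrib]
    refine Finset.sum_congr rfl fun k _ => ?_
    rw [hq k, mul_add, ← map_mul, mul_assoc]
  -- uniqueness kernel: q * (x - ι a) = ι c → c = 0
  have keyC : ∀ (q : S) (c : L), q * (x - ι a) = ι c → c = 0 := by
    intro q c h
    set pq := rep.symm q with hpq
    by_cases hz : pq = 0
    · have hq0 : q = 0 := by
        have h0 : rep.symm q = rep.symm 0 := by rw [map_zero, ← hpq, hz]
        exact rep.symm.injective h0
      rw [hq0, zero_mul] at h
      exact hι (by rw [← h, map_zero])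
    · exfalso
      have hq : q = ∑ k ∈ pq.support, ι (pq k) * x ^ k := by
        conv_lhs => rw [← rep.apply_symm_apply q, ← hpq, hrep]
      -- define g1 and g2
      set g1 : ℕ →₀ L := Finsupp.mapDomain (· + 1) pq with hg1
      set g2 : ℕ →₀ L := Finsupp.onFinset pq.support (fun k => pq k * (⇑σ)^[k] a)
        (fun k hk => by
          rw [Finsupp.mem_support_iff]
          intro h0
          simp [h0] at hk) with hg2
      have hinj : Function.Injective (· + 1 : ℕ → ℕ) := fun m n h => by simpa using h
      have hrg1 : rep g1 = ∑ k ∈ pq.support, ι (pq k) * x ^ (k + 1) := by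
        rw [hrep' g1 (pq.support.image (· + 1))
          (by rw [hg1]; exact Finsupp.mapDomain_support)]
        rw [Finset.sum_image (fun m _ n _ h => hinj h)]
        refine Finset.sum_congr rfl fun k _ => ?_
        rw [hg1, Finsupp.mapDomain_apply hinj]
      have hrg2 : rep g2 = ∑ k ∈ pq.support, ι (pq k * (⇑σ)^[k] a) * x ^ k := by
        rw [hrep' g2 pq.support Finsupp.support_onFinset_subset]
        exact Finset.sum_congr rfl fun k _ => rfl
      have hgeq : rep (g1 - g2) = q * (x - ι a) := by
        rw [map_sub, hrg1, hrg2, hq, Finset.sum_mul, ← Finset.sum_sub_distrib]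
        refine Finset.sum_congr rfl fun k _ => ?_
        rw [mul_sub, pow_succ, map_mul, mul_assoc, ← hxk k a]
        noncomm_ring
      have : g1 - g2 = Finsupp.single 0 c := by
        apply rep.injective
        rw [hgeq, h, hsingle]
      -- evaluate at m+1 where m = max of support
      have hne : pq.support.Nonempty := Finsupp.support_nonempty_iff.mpr hz
      set m := pq.support.max' hne with hm
      have hmem : m ∈ pq.support := pq.support.max'_mem hne
      have h1 : g1 (m + 1) = pq m := by
        rw [hg1]
        exact Finsupp.mapDomain_apply hinj pq m
      have h2 : g2 (m + 1) = 0 := by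
        have : pq (m + 1) = 0 := by
          by_contra hc
          have := Finset.le_max' pq.support (m + 1) (Finsupp.mem_support_iff.mpr hc)
          omega
        rw [hg2]
        simp [Finsupp.onFinset_apply, this]
      have := congrArg (fun g => g (m + 1)) this
      simp only [Finsupp.sub_apply, h1, h2, sub_zero] at this
      rw [Finsupp.single_apply] at this
      simp at this
      exact Finsupp.mem_support_iff.mp hmem this
  obtain ⟨q0, hq0⟩ := hex
  refine ⟨⟨q0, hq0⟩, fun q r hr => ?_⟩
  have heq := hq0.symm.trans hr
  have h2 : (q0 - q) * (x - ι a)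
      = ι (r - ∑ k ∈ (rep.symm f).support, (rep.symm f) k * N k) := by
    rw [map_sub, sub_mul, sub_eq_sub_iff_add_eq_add, heq, add_comm]
  have h3 := keyC _ _ h2
  exact sub_eq_zero.mp h3
end
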